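/- arXiv:1611.02771 — 5 statements merged into one kernel-verified Lean document; each statement's English description precedes it below -/
import Mathlib

section
/- Let n, k be positive integers with n ≥ k and n ≥ 3(n-k). In any linear chord diagram of size n with all chords of length at least k, the number of chords that start in L = {1,...,k} and end in R = {2n-k+1,...,2n} is at least n - (2n - 2k) = 2k - n, and hence at least n - k. -/
/-- The set of linear chord diagrams of size `n` in which every chord has length at least `k`:
partitions of `{1,...,2n}` into blocks of size two `{s,e}` with `s < e` and `e - s ≥ k`. -/
def LCD (n k : ℕ) : Set (Finpartition (Finset.Icc 1 (2*n))) :=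
  {P | ∀ p ∈ P.parts, ∃ s e : ℕ, s < e ∧ p = {s, e} ∧ k ≤ e - s}

private lemma pair_eq_pair {s e s' e' : ℕ} (h1 : s < e) (h2 : s' < e')
    (h : ({s, e} : Finset ℕ) = {s', e'}) : s = s' ∧ e = e' := by
  have hs : s ∈ ({s', e'} : Finset ℕ) := h ▸ Finset.mem_insert_self s {e}
  have he : e ∈ ({s', e'} : Finset ℕ) := h ▸ Finset.mem_insert_of_mem (Finset.mem_singleton_self e)
  have hs' : s' ∈ ({s, e} : Finset ℕ) := h ▸ Finset.mem_insert_self s' {e'}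
  have he' : e' ∈ ({s, e} : Finset ℕ) := h ▸ Finset.mem_insert_of_mem (Finset.mem_singleton_self e')
  simp only [Finset.mem_insert, Finset.mem_singleton] at hs he hs' he'
  omega

theorem stmt_5 (n k : ℕ) (hn : 1 ≤ n) (hk : 1 ≤ k) (hkn : k ≤ n) (h3 : 3 * (n - k) ≤ n)
    (P : Finpartition (Finset.Icc 1 (2*n))) (hP : P ∈ LCD n k) :
    2 * k - n ≤ {p ∈ (P.parts : Set (Finset ℕ)) |
        ∃ s e : ℕ, s < e ∧ p = {s, e} ∧ s ≤ k ∧ 2 * n - k + 1 ≤ e}.ncard ∧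
    n - k ≤ {p ∈ (P.parts : Set (Finset ℕ)) |
        ∃ s e : ℕ, s < e ∧ p = {s, e} ∧ s ≤ k ∧ 2 * n - k + 1 ≤ e}.ncard := by
  classical
  have h2n3k : 2 * n ≤ 3 * k := by omega
  set M : Finset ℕ := Finset.Icc (k+1) (2*n-k) with hM
  set pred : Finset ℕ → Prop :=
    fun p => ∃ s e : ℕ, s < e ∧ p = {s, e} ∧ s ≤ k ∧ 2 * n - k + 1 ≤ e with hpred
  have hset : {p ∈ (P.parts : Set (Finset ℕ)) |
      ∃ s e : ℕ, s < e ∧ p = {s, e} ∧ s ≤ k ∧ 2 * n - k + 1 ≤ e}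
      = ↑(P.parts.filter pred) := by
    ext p; simp [hpred]
  rw [hset, Set.ncard_coe_finset]
  -- every part has card 2
  have hcard2 : ∀ p ∈ P.parts, p.card = 2 := by
    intro p hp
    obtain ⟨s, e, hse, hpe, -⟩ := hP p hp
    rw [hpe, Finset.card_insert_of_notMem (by simp; omega), Finset.card_singleton]
  -- number of parts is n
  have hparts : P.parts.card = n := by
    have := P.sum_card_parts
    rw [Finset.sum_congr rfl hcard2, Finset.sum_const, Nat.card_Icc] at this
    simp at this
    omega
  -- key: each part meets M in 0 or 1 points, according to pred
  have key : ∀ p ∈ P.parts, (p ∩ M).card = if pred p then 0 else 1 := by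
    intro p hp
    obtain ⟨s, e, hse, hpe, hlen⟩ := hP p hp
    have hsub : p ⊆ Finset.Icc 1 (2*n) := P.le hp
    have hsmem : s ∈ Finset.Icc 1 (2*n) := hsub (hpe ▸ Finset.mem_insert_self s {e})
    have hemem : e ∈ Finset.Icc 1 (2*n) :=
      hsub (hpe ▸ Finset.mem_insert_of_mem (Finset.mem_singleton_self e))
    rw [Finset.mem_Icc] at hsmem hemem
    by_cases h : pred p
    · rw [if_pos h]
      obtain ⟨s', e', hse', hpe', hsk, hek⟩ := h
      obtain ⟨rfl, rfl⟩ := pair_eq_pair hse hse' (hpe ▸ hpe')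
      have : p ∩ M = ∅ := by
        rw [hpe]; ext x
        simp only [Finset.mem_inter, Finset.mem_insert, Finset.mem_singleton, hM,
          Finset.mem_Icc, Finset.notMem_empty, iff_false]
        omega
      rw [this, Finset.card_empty]
    · rw [if_neg h]
      have hne : ¬(s ≤ k ∧ 2 * n - k + 1 ≤ e) := fun hc => h ⟨s, e, hse, hpe, hc.1, hc.2⟩
      by_cases hs : s ≤ k
      · have : p ∩ M = {e} := by
          rw [hpe]; ext x
          simp only [Finset.mem_inter, Finset.mem_insert, Finset.mem_singleton, hM,
            Finset.mem_Icc]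
          omega
        rw [this, Finset.card_singleton]
      · have : p ∩ M = {s} := by
          rw [hpe]; ext x
          simp only [Finset.mem_inter, Finset.mem_insert, Finset.mem_singleton, hM,
            Finset.mem_Icc]
          omega
        rw [this, Finset.card_singleton]
  -- sum of intersections with M equals |M|
  have hbiUnion : P.parts.biUnion (fun p => p ∩ M) = M := by
    ext x
    simp only [Finset.mem_biUnion, Finset.mem_inter]
    constructor
    · rintro ⟨p, -, -, hxM⟩; exact hxM
    · intro hxM
      have hxS : x ∈ Finset.Icc 1 (2*n) := by
        rw [hM, Finset.mem_Icc] at hxM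
        rw [Finset.mem_Icc]
        omega
      obtain ⟨p, hp, hxp⟩ := P.exists_mem hxS
      exact ⟨p, hp, hxp, hxM⟩
  have hMsum : ∑ p ∈ P.parts, (p ∩ M).card = M.card := by
    have hdisj : ∀ p ∈ P.parts, ∀ q ∈ P.parts, p ≠ q → Disjoint (p ∩ M) (q ∩ M) := by
      intro p hp q hq hpq
      exact Finset.disjoint_of_subset_left Finset.inter_subset_left
        (Finset.disjoint_of_subset_right Finset.inter_subset_left
          (P.disjoint hp hq hpq))
    have := Finset.card_biUnion hdisj
    rw [hbiUnion] at this
    exact this.symm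
  rw [Finset.sum_congr rfl key, Finset.sum_ite, Finset.sum_const, Finset.sum_const,
    smul_eq_mul, smul_eq_mul, mul_zero, mul_one, zero_add] at hMsum
  have hsplit := Finset.card_filter_add_card_filter_not (s := P.parts) (p := pred)
  rw [hparts] at hsplit
  rw [hM, Nat.card_Icc] at hMsum
  omega
end

section
/- Let n, k be positive integers with n+1 ≥ 3(n-k) and n ≥ k. Let C be a linear chord diagram of size n+1 in which every chord has length at least k+1. Let a be the chord of C whose end point is 2n-k+2 (the smallest element of {2(n+1)-(k+1)+1,...,2(n+1)}), and let S be the set of chords of C that start in {1,...,k+1} and end in {2n-k+2,...,2n+2}. Then the number of chords b ∈ S with s_b < s_a is strictly less than n - k + 1. -/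
theorem stmt_6 (n k : ℕ) (hn : 1 ≤ n) (hk : 1 ≤ k) (hkn : k ≤ n) (h3 : 3 * (n - k) ≤ n + 1)
    (P : Finpartition (Finset.Icc 1 (2*(n+1)))) (hP : P ∈ LCD (n+1) (k+1))
    (sa : ℕ) (ha : sa < 2 * n - k + 2) (haP : ({sa, 2 * n - k + 2} : Finset ℕ) ∈ P.parts) :
    {p ∈ (P.parts : Set (Finset ℕ)) |
        ∃ s e : ℕ, s < e ∧ p = {s, e} ∧ s ≤ k + 1 ∧ 2 * n - k + 2 ≤ e ∧ s < sa}.ncard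
      < n - k + 1 := by
  classical
  set m := 2 * n - k with hmdef
  have hm : k + m = 2 * n := by omega
  have h3' : 2 * n ≤ 3 * k + 1 := by omega
  set mn : Finset ℕ → ℕ := fun p => if h : p.Nonempty then p.min' h else 0 with hmn
  set mx : Finset ℕ → ℕ := fun p => if h : p.Nonempty then p.max' h else 0 with hmx
  -- master facts about each part
  have master : ∀ p ∈ P.parts, (mn p ∈ p ∧ mx p ∈ p) ∧ p = {mn p, mx p} ∧
      mn p + (k+1) ≤ mx p ∧ 1 ≤ mn p ∧ mx p ≤ 2*n+2 ∧ (∀ x ∈ p, mn p ≤ x ∧ x ≤ mx p) := by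
    intro p hp
    obtain ⟨s, e, hse, hpse, hlen⟩ := hP p hp
    have hsp : s ∈ p := by rw [hpse]; simp
    have hep : e ∈ p := by rw [hpse]; simp
    have hne : p.Nonempty := ⟨s, hsp⟩
    have hsub : p ⊆ Finset.Icc 1 (2*(n+1)) := P.le hp
    have hbd : ∀ x ∈ p, 1 ≤ x ∧ x ≤ 2*n+2 := by
      intro x hx; have := hsub hx; rw [Finset.mem_Icc] at this; omega
    have hmneq : mn p = s := by
      have h1 : p.min' hne ≤ s := p.min'_le s hsp
      have h2 : p.min' hne ∈ ({s, e} : Finset ℕ) := by rw [← hpse]; exact p.min'_mem hne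
      rw [Finset.mem_insert, Finset.mem_singleton] at h2
      simp only [hmn, dif_pos hne]
      rcases h2 with h | h <;> omega
    have hmxeq : mx p = e := by
      have h1 : e ≤ p.max' hne := p.le_max' e hep
      have h2 : p.max' hne ∈ ({s, e} : Finset ℕ) := by rw [← hpse]; exact p.max'_mem hne
      rw [Finset.mem_insert, Finset.mem_singleton] at h2
      simp only [hmx, dif_pos hne]
      rcases h2 with h | h <;> omega
    rw [hmneq, hmxeq]
    refine ⟨⟨hsp, hep⟩, hpse, by omega, (hbd s hsp).1, (hbd e hep).2, ?_⟩
    intro x hx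
    rw [hpse, Finset.mem_insert, Finset.mem_singleton] at hx
    rcases hx with h | h <;> omega
  -- facts about the chord a
  have haA : sa ∈ ({sa, m+2} : Finset ℕ) := by simp
  have haB : m + 2 ∈ ({sa, m+2} : Finset ℕ) := by simp
  obtain ⟨⟨hamn', hamx'⟩, haeq, halen, hamn1, hamxbd, habd⟩ := master _ haP
  have hamn : mn ({sa, m+2} : Finset ℕ) = sa := by
    have h1 := (habd sa haA).1
    have h2 : mn ({sa, m+2} : Finset ℕ) ∈ ({sa, m+2} : Finset ℕ) := hamn'
    rw [Finset.mem_insert, Finset.mem_singleton] at h2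
    rcases h2 with h | h <;> omega
  have hamx : mx ({sa, m+2} : Finset ℕ) = m + 2 := by
    have h1 := (habd (m+2) haB).2
    have h2 : mx ({sa, m+2} : Finset ℕ) ∈ ({sa, m+2} : Finset ℕ) := hamx'
    rw [Finset.mem_insert, Finset.mem_singleton] at h2
    rcases h2 with h | h <;> omega
  have hsa1 : 1 ≤ sa := by rw [hamn] at hamn1; exact hamn1
  have hsau : sa + 2 * k ≤ 2 * n + 1 := by rw [hamn, hamx] at halen; omega
  -- unique part containing a point
  have uniq : ∀ p ∈ P.parts, ∀ q ∈ P.parts, ∀ x, x ∈ p → x ∈ q → p = q := by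
    intro p hp q hq x hxp hxq; exact P.eq_of_mem_parts hp hq hxp hxq
  -- part of a point
  have getpart : ∀ x, 1 ≤ x → x ≤ 2*n+2 → ∃ p ∈ P.parts, x ∈ p := by
    intro x h1 h2
    exact P.exists_mem (by rw [Finset.mem_Icc]; omega)
  -- number of parts
  have hcard : P.parts.card = n + 1 := by
    have h1 := P.sum_card_parts
    have h2 : ∀ p ∈ P.parts, p.card = 2 := by
      intro p hp
      obtain ⟨-, hpeq, hlen, -, -, -⟩ := master p hp
      rw [hpeq, Finset.card_insert_of_notMem (by simp; omega), Finset.card_singleton]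
    rw [Finset.sum_congr rfl h2, Finset.sum_const, Nat.card_Icc] at h1
    simp at h1; omega
  -- predicates
  set pLo : Finset ℕ → Prop := fun p => ∃ x ∈ p, x < sa with hpLo
  set pHi : Finset ℕ → Prop := fun p => ∃ x ∈ p, m + 2 ≤ x with hpHi
  set pW : Finset ℕ → Prop := fun p => ∀ x ∈ p, x ≤ m + 1 with hpW
  set pB : Finset ℕ → Prop := fun p => ∃ x ∈ p, m + 3 ≤ x with hpB
  have hiffLo : ∀ p ∈ P.parts, pLo p ↔ mn p < sa := by
    intro p hp
    obtain ⟨⟨h1, h2⟩, -, -, -, -, hbd⟩ := master p hp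
    constructor
    · rintro ⟨x, hx, hxlt⟩; exact lt_of_le_of_lt (hbd x hx).1 hxlt
    · intro h; exact ⟨mn p, h1, h⟩
  have hiffHi : ∀ p ∈ P.parts, pHi p ↔ m + 2 ≤ mx p := by
    intro p hp
    obtain ⟨⟨h1, h2⟩, -, -, -, -, hbd⟩ := master p hp
    constructor
    · rintro ⟨x, hx, hxle⟩; exact le_trans hxle (hbd x hx).2
    · intro h; exact ⟨mx p, h2, h⟩
  have hiffW : ∀ p ∈ P.parts, pW p ↔ mx p ≤ m + 1 := by
    intro p hp
    obtain ⟨⟨h1, h2⟩, -, -, -, -, hbd⟩ := master p hp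
    constructor
    · intro h; exact h _ h2
    · intro h x hx; exact le_trans (hbd x hx).2 h
  have hiffB : ∀ p ∈ P.parts, pB p ↔ m + 3 ≤ mx p := by
    intro p hp
    obtain ⟨⟨h1, h2⟩, -, -, -, -, hbd⟩ := master p hp
    constructor
    · rintro ⟨x, hx, hxle⟩; exact le_trans hxle (hbd x hx).2
    · intro h; exact ⟨mx p, h2, h⟩
  have hWnegHi : ∀ p : Finset ℕ, (¬ pHi p) ↔ pW p := by
    intro p
    simp only [hpHi, hpW]
    push_neg
    constructor <;> intro h x hx <;> have := h x hx <;> omega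
  -- #B = k
  have hBcard : (P.parts.filter pB).card = k := by
    have := Finset.card_bij (s := P.parts.filter pB) (t := Finset.Icc (m+3) (2*n+2))
      (fun p _ => mx p) ?_ ?_ ?_
    · rw [this, Nat.card_Icc]; omega
    · intro p hp
      rw [Finset.mem_filter] at hp
      obtain ⟨-, -, -, -, hbd, -⟩ := master p hp.1
      rw [Finset.mem_Icc]
      exact ⟨(hiffB p hp.1).mp hp.2, hbd⟩
    · intro p hp q hq heq
      rw [Finset.mem_filter] at hp hq
      obtain ⟨⟨-, h2⟩, -, -, -, -, -⟩ := master p hp.1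
      obtain ⟨⟨-, h2'⟩, -, -, -, -, -⟩ := master q hq.1
      have heq' : mx p = mx q := heq
      exact uniq p hp.1 q hq.1 (mx q) (heq' ▸ h2) h2'
    · intro y hy
      rw [Finset.mem_Icc] at hy
      obtain ⟨p, hp, hyp⟩ := getpart y (by omega) hy.2
      obtain ⟨⟨h1, h2⟩, hpeq, hlen, hmn1, hmxbd, hbd⟩ := master p hp
      have hy2 : y = mn p ∨ y = mx p := by
        have : y ∈ ({mn p, mx p} : Finset ℕ) := hpeq ▸ hyp
        rw [Finset.mem_insert, Finset.mem_singleton] at this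
        exact this
      have hymx : y = mx p := by rcases hy2 with h | h <;> omega
      refine ⟨p, Finset.mem_filter.mpr ⟨hp, ⟨y, hyp, hy.1⟩⟩, hymx.symm⟩
  -- parts not in W: exactly B plus the chord a
  have hnW : P.parts.filter (fun p => ¬ pW p) = insert ({sa, m+2} : Finset ℕ) (P.parts.filter pB) := by
    ext p
    rw [Finset.mem_insert, Finset.mem_filter, Finset.mem_filter]
    constructor
    · rintro ⟨hp, hnpw⟩
      by_cases hb : pB p
      · exact Or.inr ⟨hp, hb⟩
      · left
        have hnpw' : pHi p := by
          by_contra hc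
          exact hnpw ((hWnegHi p).mp hc)
        obtain ⟨x, hx, hxge⟩ := hnpw'
        have hxle : x ≤ m + 2 := by
          by_contra hcon
          exact hb ⟨x, hx, by omega⟩
        have hxeq : x = m + 2 := by omega
        exact uniq p hp _ haP x hx (hxeq ▸ haB)
    · rintro (rfl | ⟨hp, hb⟩)
      · refine ⟨haP, ?_⟩
        intro hcon
        have := hcon (m+2) haB
        omega
      · refine ⟨hp, ?_⟩
        intro hcon
        obtain ⟨x, hx, hxge⟩ := hb
        have := hcon x hx
        omega
  have hWcard : (P.parts.filter pW).card + (k + 1) = n + 1 := by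
    have hsplit := Finset.card_filter_add_card_filter_not (s := P.parts) (p := pW)
    have hanB : ({sa, m+2} : Finset ℕ) ∉ P.parts.filter pB := by
      rw [Finset.mem_filter]
      rintro ⟨-, x, hx, hxge⟩
      rw [Finset.mem_insert, Finset.mem_singleton] at hx
      rcases hx with h | h <;> omega
    rw [hnW, Finset.card_insert_of_notMem hanB, hBcard, hcard] at hsplit
    omega
  -- # parts with a point < sa  equals  sa - 1
  have hLocard : (P.parts.filter pLo).card = sa - 1 := by
    have := Finset.card_bij (s := P.parts.filter pLo) (t := Finset.Icc 1 (sa-1))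
      (fun p _ => mn p) ?_ ?_ ?_
    · rw [this, Nat.card_Icc]; omega
    · intro p hp
      rw [Finset.mem_filter] at hp
      obtain ⟨-, -, -, hmn1, -, -⟩ := master p hp.1
      rw [Finset.mem_Icc]
      have hlt := (hiffLo p hp.1).mp hp.2
      have h9 : mn p ≤ sa - 1 := by omega
      exact ⟨hmn1, h9⟩
    · intro p hp q hq heq
      rw [Finset.mem_filter] at hp hq
      obtain ⟨⟨h1, -⟩, -, -, -, -, -⟩ := master p hp.1
      obtain ⟨⟨h1', -⟩, -, -, -, -, -⟩ := master q hq.1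
      have heq' : mn p = mn q := heq
      exact uniq p hp.1 q hq.1 (mn q) (heq' ▸ h1) h1'
    · intro y hy
      rw [Finset.mem_Icc] at hy
      obtain ⟨p, hp, hyp⟩ := getpart y hy.1 (by omega)
      obtain ⟨⟨h1, h2⟩, hpeq, hlen, hmn1, hmxbd, hbd⟩ := master p hp
      have hy2 : y = mn p ∨ y = mx p := by
        have : y ∈ ({mn p, mx p} : Finset ℕ) := hpeq ▸ hyp
        rw [Finset.mem_insert, Finset.mem_singleton] at this
        exact this
      have hymn : y = mn p := by rcases hy2 with h | h <;> omega
      refine ⟨p, Finset.mem_filter.mpr ⟨hp, ⟨y, hyp, by omega⟩⟩, hymn.symm⟩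
  -- split the Lo parts by Hi
  have eLo : (P.parts.filter (fun p => pLo p ∧ pHi p)).card
      + (P.parts.filter (fun p => pLo p ∧ pW p)).card = sa - 1 := by
    have hsplit := Finset.card_filter_add_card_filter_not
      (s := P.parts.filter pLo) (p := pHi)
    rw [Finset.filter_filter, Finset.filter_filter] at hsplit
    rw [Finset.filter_congr (fun p _ => by rw [hWnegHi p] :
      ∀ p ∈ P.parts, (pLo p ∧ ¬ pHi p) ↔ (pLo p ∧ pW p))] at hsplit
    rw [hLocard] at hsplit
    exact hsplit
  -- split W by Lo
  have eW : (P.parts.filter (fun p => pLo p ∧ pW p)).card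
      + (P.parts.filter (fun p => pW p ∧ ¬ pLo p)).card = (P.parts.filter pW).card := by
    have hsplit := Finset.card_filter_add_card_filter_not
      (s := P.parts.filter pW) (p := pLo)
    rw [Finset.filter_filter, Finset.filter_filter] at hsplit
    rw [Finset.filter_congr (fun p _ => Iff.intro (fun h => ⟨h.2, h.1⟩) (fun h => ⟨h.2, h.1⟩) :
      ∀ p ∈ P.parts, (pW p ∧ pLo p) ↔ (pLo p ∧ pW p))] at hsplit
    exact hsplit
  -- bound on inner chords
  have eInner : (P.parts.filter (fun p => pW p ∧ ¬ pLo p)).card ≤ (2*n - 2*k) + 1 - (sa + 1) := by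
    have hmaps : ∀ p ∈ P.parts.filter (fun p => pW p ∧ ¬ pLo p), mn p ∈ Finset.Icc (sa+1) (2*n-2*k) := by
      intro p hp
      rw [Finset.mem_filter] at hp
      obtain ⟨hp1, hpw, hnlo⟩ := hp
      obtain ⟨⟨h1, h2⟩, -, hlen, -, -, hbd⟩ := master p hp1
      have hge : sa ≤ mn p := by
        by_contra hcon
        exact hnlo ⟨mn p, h1, by omega⟩
      have hne : mn p ≠ sa := by
        intro hcon
        have hpa : p = ({sa, m+2} : Finset ℕ) := uniq p hp1 _ haP sa (hcon ▸ h1) haA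
        have hmxle := (hiffW p hp1).mp hpw
        rw [hpa, hamx] at hmxle
        omega
      have hle : mx p ≤ m + 1 := (hiffW p hp1).mp hpw
      rw [Finset.mem_Icc]
      omega
    have hinj : Set.InjOn mn ↑(P.parts.filter (fun p => pW p ∧ ¬ pLo p)) := by
      intro p hp q hq heq
      rw [Finset.mem_coe, Finset.mem_filter] at hp hq
      obtain ⟨⟨h1, -⟩, -, -, -, -, -⟩ := master p hp.1
      obtain ⟨⟨h1', -⟩, -, -, -, -, -⟩ := master q hq.1
      exact uniq p hp.1 q hq.1 (mn p) h1 (heq ▸ h1')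
    have := Finset.card_le_card_of_injOn mn hmaps hinj
    rw [Nat.card_Icc] at this
    exact this
  -- the statement set is the Lo ∧ Hi filter
  have hsetEq : {p ∈ (P.parts : Set (Finset ℕ)) |
        ∃ s e : ℕ, s < e ∧ p = {s, e} ∧ s ≤ k + 1 ∧ m + 2 ≤ e ∧ s < sa}
      = ↑(P.parts.filter (fun p => pLo p ∧ pHi p)) := by
    ext p
    simp only [Set.mem_setOf_eq, Finset.coe_filter, Finset.mem_coe]
    constructor
    · rintro ⟨hp, s, e, hse, hpeq, hsk, hem, hssa⟩
      refine ⟨hp, ⟨s, by rw [hpeq]; simp, hssa⟩, ⟨e, by rw [hpeq]; simp, hem⟩⟩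
    · rintro ⟨hp, hlo, hhi⟩
      obtain ⟨s, e, hse, hpeq, hlen⟩ := hP p hp
      have hsmem : s ∈ p := by rw [hpeq]; simp
      have hemem : e ∈ p := by rw [hpeq]; simp
      have hssa : s < sa := by
        obtain ⟨x, hx, hxlt⟩ := hlo
        rw [hpeq, Finset.mem_insert, Finset.mem_singleton] at hx
        rcases hx with h | h <;> omega
      have hem : m + 2 ≤ e := by
        obtain ⟨x, hx, hxge⟩ := hhi
        rw [hpeq, Finset.mem_insert, Finset.mem_singleton] at hx
        rcases hx with h | h <;> omega
      exact ⟨hp, s, e, hse, hpeq, by omega, hem, hssa⟩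
  rw [hsetEq, Set.ncard_coe_finset]
  omega
end

section
/- Let n, k be positive integers with n ≥ k and n ≥ 3(n-k). In any linear chord diagram of size n with all chords of length at least k, order the chords ending in M = {k+1,...,2n-k} as c_1 < c_2 < ... < c_{n-k} by end point; then for each i, e_{c_i} ≤ n + i and s_{c_i} ≤ n - k + i. -/
lemma aux_strictMono {m : ℕ} (g : Fin m → ℕ) (hg : StrictMono g) :
    ∀ d : ℕ, ∀ i j : Fin m, i.val + d = j.val → g i + d ≤ g j := by
  intro d
  induction d with
  | zero =>
    intro i j h
    have : i = j := Fin.ext (by omega)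
    simp [this]
  | succ d ih =>
    intro i j h
    have hj1 : j.val - 1 < m := by omega
    set j' : Fin m := ⟨j.val - 1, hj1⟩ with hj'
    have h1 : g i + d ≤ g j' := ih i j' (by simp [hj']; omega)
    have h2 : g j' < g j := hg (by simp [Fin.lt_def, hj']; omega)
    omega

lemma aux_pair_eq (s e s' e' : ℕ) (hs : s < e) (hs' : s' < e')
    (h : ({s, e} : Finset ℕ) = {s', e'}) : s = s' ∧ e = e' := by
  have h1 : s ∈ ({s', e'} : Finset ℕ) := h ▸ Finset.mem_insert_self s {e}
  have h2 : e ∈ ({s', e'} : Finset ℕ) := h ▸ (by simp)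
  have h3 : s' ∈ ({s, e} : Finset ℕ) := h ▸ Finset.mem_insert_self s' {e'}
  have h4 : e' ∈ ({s, e} : Finset ℕ) := h ▸ (by simp)
  simp only [Finset.mem_insert, Finset.mem_singleton] at h1 h2 h3 h4
  omega

theorem stmt_7 (n k : ℕ) (hn : 1 ≤ n) (hk : 1 ≤ k) (hkn : k ≤ n) (h3 : 3 * (n - k) ≤ n)
    (P : Finpartition (Finset.Icc 1 (2*n))) (hP : P ∈ LCD n k)
    (c : Fin (n - k) → ℕ × ℕ)
    (hc : ∀ i, (c i).1 < (c i).2 ∧ ({(c i).1, (c i).2} : Finset ℕ) ∈ P.parts ∧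
        k + 1 ≤ (c i).2 ∧ (c i).2 ≤ 2 * n - k)
    (hmono : StrictMono (fun i => (c i).2)) :
    ∀ i : Fin (n - k), (c i).2 ≤ n + ((i : ℕ) + 1) ∧ (c i).1 ≤ n - k + ((i : ℕ) + 1) := by
  intro i
  have hm : 1 ≤ n - k := by have := i.isLt; omega
  set j : Fin (n - k) := ⟨n - k - 1, by omega⟩ with hj
  have hij : i.val + ((n - k - 1) - i.val) = j.val := by
    have := i.isLt; simp [hj]; omega
  have hle : (c i).2 + ((n - k - 1) - i.val) ≤ (c j).2 :=
    aux_strictMono (fun i => (c i).2) hmono _ i j hij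
  have hjend : (c j).2 ≤ 2 * n - k := (hc j).2.2.2
  have hiv : i.val ≤ n - k - 1 := by have := i.isLt; omega
  have he : (c i).2 ≤ n + ((i : ℕ) + 1) := by omega
  refine ⟨he, ?_⟩
  -- length ≥ k from partition membership
  obtain ⟨hlt, hmem, -, -⟩ := hc i
  obtain ⟨s, e, hse, hpeq, hlen⟩ := hP _ hmem
  obtain ⟨h1, h2⟩ := aux_pair_eq (c i).1 (c i).2 s e hlt hse hpeq
  omega
end

section
/- Let n and k be positive integers with n ≥ 3(n-k) and n ≥ k. Then the number of linear chord diagrams of size n+1 in which every chord has length at least k+1 equals (n - k + 1) times the number of linear chord diagrams of size n in which every chord has length at least k. -/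
open Finset

/-- points covered by a chord set -/
def pts (F : Finset (ℕ × ℕ)) : Finset ℕ := F.biUnion (fun q => {q.1, q.2})

/-- chord-set encoding of a diagram -/
def CSP (n k : ℕ) (F : Finset (ℕ × ℕ)) : Prop :=
  (∀ q ∈ F, q.1 < q.2 ∧ k ≤ q.2 - q.1) ∧
  pts F = Finset.Icc 1 (2*n) ∧
  (∀ q ∈ F, ∀ q' ∈ F, q ≠ q' → q.1 ≠ q'.1 ∧ q.1 ≠ q'.2 ∧ q.2 ≠ q'.1 ∧ q.2 ≠ q'.2)

noncomputable def CSF (n k : ℕ) : Finset (Finset (ℕ × ℕ)) :=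
  @Finset.filter _ (CSP n k) (Classical.decPred _)
    ((Finset.Icc 1 (2*n) ×ˢ Finset.Icc 1 (2*n)).powerset)

lemma mem_pts {F : Finset (ℕ × ℕ)} {x : ℕ} :
    x ∈ pts F ↔ ∃ q ∈ F, x = q.1 ∨ x = q.2 := by
  simp only [pts, Finset.mem_biUnion, Finset.mem_insert, Finset.mem_singleton]

lemma mem_CSF {n k : ℕ} {F : Finset (ℕ × ℕ)} : F ∈ CSF n k ↔ CSP n k F := by
  rw [CSF, @Finset.mem_filter _ _ (Classical.decPred _)]
  constructor
  · intro h; exact h.2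
  · intro h
    refine ⟨Finset.mem_powerset.2 ?_, h⟩
    intro q hq
    have h1 : q.1 ∈ pts F := mem_pts.2 ⟨q, hq, Or.inl rfl⟩
    have h2 : q.2 ∈ pts F := mem_pts.2 ⟨q, hq, Or.inr rfl⟩
    rw [h.2.1] at h1 h2
    rcases q with ⟨a, b⟩
    exact Finset.mem_product.2 ⟨h1, h2⟩
def pmax (p : Finset ℕ) : ℕ := p.sup id
def pmin (p : Finset ℕ) : ℕ := (p.erase (p.sup id)).sup id

lemma pair_sup {s e : ℕ} (h : s < e) : ({s,e} : Finset ℕ).sup id = e := by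
  simp [Finset.sup_insert]; omega

lemma pair_pmax {s e : ℕ} (h : s < e) : pmax {s,e} = e := pair_sup h

lemma pair_pmin {s e : ℕ} (h : s < e) : pmin {s,e} = s := by
  rw [pmin, pair_sup h, Finset.erase_insert_of_ne h.ne, Finset.erase_singleton]
  simp

lemma mem_pmin {s e : ℕ} (h : s < e) : pmin {s,e} ∈ ({s,e} : Finset ℕ) := by
  rw [pair_pmin h]; simp

lemma mem_pmax {s e : ℕ} (h : s < e) : pmax {s,e} ∈ ({s,e} : Finset ℕ) := by
  rw [pair_pmax h]; simp

variable {n k : ℕ}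

lemma toCS_mem {P : Finpartition (Finset.Icc 1 (2*n))} (hP : P ∈ LCD n k) :
    CSP n k (P.parts.image (fun p => (pmin p, pmax p))) := by
  refine ⟨?_, ?_, ?_⟩
  · intro q hq
    obtain ⟨p, hp, rfl⟩ := Finset.mem_image.1 hq
    obtain ⟨s, e, hse, rfl, hlen⟩ := hP p hp
    simpa [pair_pmin hse, pair_pmax hse] using ⟨hse, hlen⟩
  · rw [pts, Finset.image_biUnion]
    have : ∀ p ∈ P.parts,
        ({((fun p => (pmin p, pmax p)) p).1, ((fun p => (pmin p, pmax p)) p).2} : Finset ℕ) = p := by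
      intro p hp
      obtain ⟨s, e, hse, rfl, hlen⟩ := hP p hp
      simp [pair_pmin hse, pair_pmax hse]
    rw [Finset.biUnion_congr rfl this]
    rw [← Finset.sup_eq_biUnion]
    exact P.sup_parts
  · intro q hq q' hq' hne
    obtain ⟨p, hp, rfl⟩ := Finset.mem_image.1 hq
    obtain ⟨p', hp', rfl⟩ := Finset.mem_image.1 hq'
    have hpp : p ≠ p' := by rintro rfl; exact hne rfl
    have hd := P.disjoint hp hp' hpp
    obtain ⟨s, e, hse, rfl, hlen⟩ := hP p hp
    obtain ⟨s', e', hse', rfl, hlen'⟩ := hP p' hp'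
    have hd' := Finset.disjoint_left.1 hd
    simp only [pair_pmin hse, pair_pmax hse, pair_pmin hse', pair_pmax hse']
    have h1 : s ∉ ({s',e'} : Finset ℕ) := hd' (by simp)
    have h2 : e ∉ ({s',e'} : Finset ℕ) := hd' (by simp)
    simp only [Finset.mem_insert, Finset.mem_singleton] at h1 h2
    exact ⟨fun h => h1 (Or.inl h), fun h => h1 (Or.inr h),
           fun h => h2 (Or.inl h), fun h => h2 (Or.inr h)⟩

noncomputable def ofCS (F : Finset (ℕ × ℕ)) (hF : CSP n k F) :
    Finpartition (Finset.Icc 1 (2*n)) where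
  parts := F.image (fun q => ({q.1, q.2} : Finset ℕ))
  supIndep := by
    rw [Finset.supIndep_iff_pairwiseDisjoint]
    intro a ha b hb hab
    obtain ⟨q, hq, rfl⟩ := Finset.mem_image.1 ha
    obtain ⟨q', hq', rfl⟩ := Finset.mem_image.1 hb
    have hne : q ≠ q' := by rintro rfl; exact hab rfl
    obtain ⟨h1, h2, h3, h4⟩ := hF.2.2 q hq q' hq' hne
    simp only [Function.onFun, id]
    rw [Finset.disjoint_left]
    intro x hx hx'
    simp only [Finset.mem_insert, Finset.mem_singleton] at hx hx'
    rcases hx with rfl | rfl <;> rcases hx' with h | h <;> simp_all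
  sup_parts := by
    rw [Finset.sup_image]
    have : ∀ q ∈ F, (id ∘ fun q : ℕ × ℕ => ({q.1, q.2} : Finset ℕ)) q = (fun q : ℕ × ℕ => ({q.1, q.2} : Finset ℕ)) q := fun _ _ => rfl
    rw [Finset.sup_congr rfl this, Finset.sup_eq_biUnion, ← pts, hF.2.1]
  bot_notMem := by
    intro h
    obtain ⟨q, _, hq⟩ := Finset.mem_image.1 h
    have : q.1 ∈ (⊥ : Finset ℕ) := hq ▸ by simp
    simp at this

lemma ofCS_mem (F : Finset (ℕ × ℕ)) (hF : CSP n k F) : ofCS F hF ∈ LCD n k := by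
  intro p hp
  obtain ⟨q, hq, rfl⟩ := Finset.mem_image.1 hp
  exact ⟨q.1, q.2, (hF.1 q hq).1, rfl, (hF.1 q hq).2⟩

noncomputable def csEquiv (n k : ℕ) : (LCD n k) ≃ {F // F ∈ CSF n k} where
  toFun P := ⟨P.1.parts.image (fun p => (pmin p, pmax p)), mem_CSF.2 (toCS_mem P.2)⟩
  invFun F := ⟨ofCS F.1 (mem_CSF.1 F.2), ofCS_mem F.1 (mem_CSF.1 F.2)⟩
  left_inv := by
    rintro ⟨P, hP⟩
    ext1
    apply Finpartition.ext
    show (P.parts.image _).image _ = P.parts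
    rw [Finset.image_image]
    rw [Finset.image_congr (g := id) ?_, Finset.image_id]
    intro p hp
    obtain ⟨s, e, hse, rfl, hlen⟩ := hP p hp
    simp [pair_pmin hse, pair_pmax hse]
  right_inv := by
    rintro ⟨F, hF⟩
    ext1
    show (F.image _).image _ = F
    rw [Finset.image_image]
    rw [Finset.image_congr (g := id) ?_, Finset.image_id]
    intro q hq
    have h1 := ((mem_CSF.1 hF).1 q hq).1
    simp [pair_pmin h1, pair_pmax h1]

lemma card_LCD (n k : ℕ) : Nat.card (LCD n k) = (CSF n k).card := by
  rw [Nat.card_congr (csEquiv n k), Nat.card_eq_fintype_card, Fintype.card_coe]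
section Step2

lemma csp_bounds {n k : ℕ} {F : Finset (ℕ × ℕ)} (h : CSP n k F) {q : ℕ × ℕ} (hq : q ∈ F) :
    1 ≤ q.1 ∧ q.1 + k ≤ q.2 ∧ q.2 ≤ 2*n := by
  have h1 : q.1 ∈ pts F := mem_pts.2 ⟨q, hq, Or.inl rfl⟩
  have h2 : q.2 ∈ pts F := mem_pts.2 ⟨q, hq, Or.inr rfl⟩
  rw [h.2.1, Finset.mem_Icc] at h1 h2
  have := h.1 q hq
  omega

lemma csp_cover {n k : ℕ} {F : Finset (ℕ × ℕ)} (h : CSP n k F) {p : ℕ}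
    (h1 : 1 ≤ p) (h2 : p ≤ 2*n) : ∃ q ∈ F, p = q.1 ∨ p = q.2 :=
  mem_pts.1 (by rw [h.2.1]; exact Finset.mem_Icc.2 ⟨h1, h2⟩)

lemma csp_card {n k : ℕ} {F : Finset (ℕ × ℕ)} (h : CSP n k F) : F.card = n := by
  have hdisj : ∀ q ∈ F, ∀ q' ∈ F, q ≠ q' →
      Disjoint ({q.1, q.2} : Finset ℕ) ({q'.1, q'.2} : Finset ℕ) := by
    intro q hq q' hq' hne
    obtain ⟨h1, h2, h3, h4⟩ := h.2.2 q hq q' hq' hne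
    rw [Finset.disjoint_left]
    intro x hx hx'
    simp only [Finset.mem_insert, Finset.mem_singleton] at hx hx'
    rcases hx with rfl | rfl <;> rcases hx' with h | h <;> simp_all
  have hcard : (pts F).card = ∑ q ∈ F, ({q.1, q.2} : Finset ℕ).card :=
    Finset.card_biUnion hdisj
  have h2n : (pts F).card = 2*n := by rw [h.2.1, Nat.card_Icc]; omega
  have heach : ∀ q ∈ F, ({q.1, q.2} : Finset ℕ).card = 2 := by
    intro q hq
    rw [Finset.card_insert_of_notMem (by simp [(h.1 q hq).1.ne]), Finset.card_singleton]
  rw [Finset.sum_congr rfl heach, Finset.sum_const, smul_eq_mul] at hcard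
  omega

/-- unique chord ending at a given right-endpoint-only position -/
lemma csp_partner {n k : ℕ} {F : Finset (ℕ × ℕ)} (h : CSP n k F) {p : ℕ}
    (h1 : 1 ≤ p) (h2 : p ≤ 2*n) (h3 : 2*n < p + k) :
    ∃ q ∈ F, q.2 = p ∧ ∀ q' ∈ F, q'.2 = p → q' = q := by
  obtain ⟨q, hq, hor⟩ := csp_cover h h1 h2
  have hb := csp_bounds h hq
  rcases hor with h1' | h2'
  · omega
  · refine ⟨q, hq, h2'.symm, ?_⟩
    intro q' hq' hq'2
    by_contra hne
    exact (h.2.2 q' hq' q hq hne).2.2.2 (by omega)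

end Step2
def tau (m c o x : ℕ) : ℕ :=
  if x ≤ 2*m then x else if x = 2*m+1 then o else if x ≤ 4*m+c+1 then x-1 else x-2

def sig (m c o x : ℕ) : ℕ :=
  if x ≤ 2*m then (if x = o then 2*m+1 else x) else if x ≤ 4*m+c then x+1 else x+2

lemma tau_sig {m c o x : ℕ} (ho1 : 1 ≤ o) (ho2 : o ≤ 2*m+1) (hx1 : 1 ≤ x) (hx2 : x ≤ 6*m+2*c) :
    tau m c o (sig m c o x) = x := by
  unfold tau sig; split_ifs <;> omega

lemma sig_tau {m c o x : ℕ} (ho1 : 1 ≤ o) (ho2 : o ≤ 2*m+1) (hx1 : 1 ≤ x) (hx2 : x ≤ 6*m+2*c+2)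
    (hxo : x ≠ o) (hxP : x ≠ 4*m+c+2) : sig m c o (tau m c o x) = x := by
  unfold tau sig; split_ifs <;> omega

lemma pts_image (f : ℕ → ℕ) (F : Finset (ℕ × ℕ)) :
    pts (F.image (fun q => (f q.1, f q.2))) = (pts F).image f := by
  ext x
  simp only [Finset.mem_image, mem_pts]
  constructor
  · rintro ⟨q, hq, hor⟩
    obtain ⟨q', hq', rfl⟩ := hq
    rcases hor with rfl | rfl
    · exact ⟨q'.1, ⟨q', hq', Or.inl rfl⟩, rfl⟩
    · exact ⟨q'.2, ⟨q', hq', Or.inr rfl⟩, rfl⟩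
  · rintro ⟨y, hy, rfl⟩
    obtain ⟨q, hq, hor⟩ := hy
    refine ⟨(f q.1, f q.2), ⟨q, hq, rfl⟩, ?_⟩
    rcases hor with rfl | rfl
    · exact Or.inl rfl
    · exact Or.inr rfl

lemma pts_erase {n k : ℕ} {F : Finset (ℕ × ℕ)} (h : CSP n k F) {q₀ : ℕ × ℕ} (hq₀ : q₀ ∈ F) :
    pts (F.erase q₀) = pts F \ {q₀.1, q₀.2} := by
  ext x
  simp only [mem_pts, Finset.mem_erase, Finset.mem_sdiff, Finset.mem_insert, Finset.mem_singleton]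
  constructor
  · rintro ⟨q, ⟨hne, hq⟩, hor⟩
    obtain ⟨h1, h2, h3, h4⟩ := h.2.2 q hq q₀ hq₀ hne
    refine ⟨⟨q, hq, hor⟩, ?_⟩
    rcases hor with rfl | rfl <;> exact by tauto
  · rintro ⟨⟨q, hq, hor⟩, hnot⟩
    refine ⟨q, ⟨?_, hq⟩, hor⟩
    rintro rfl
    rcases hor with rfl | rfl <;> tauto

lemma pts_insert (q₀ : ℕ × ℕ) (F : Finset (ℕ × ℕ)) :
    pts (insert q₀ F) = insert q₀.1 (insert q₀.2 (pts F)) := by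
  rw [pts, Finset.biUnion_insert, ← pts]
  ext x; simp only [Finset.mem_union, Finset.mem_insert, Finset.mem_singleton]; tauto
open Classical in
/-- number of "available" left points in the small system -/
lemma count_avail {m c : ℕ} {F : Finset (ℕ × ℕ)} (h : CSP (3*m+c) (2*m+c) F) :
    ((Finset.Icc 1 (2*m+1)).filter (fun o => ∀ q ∈ F, q.1 = o → 4*m+c < q.2)).card = m+1 := by
  classical
  set ν : Finset (ℕ × ℕ) := F.filter (fun q => q.2 ≤ 4*m+c) with hν
  -- the complement filter has card 2m+c via snd-bijection with Icc (4m+c+1) (6m+2c)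
  have hRcard : (F.filter (fun q => ¬ q.2 ≤ 4*m+c)).card = 2*m+c := by
    rw [show 2*m+c = (Finset.Icc (4*m+c+1) (6*m+2*c)).card by rw [Nat.card_Icc]; omega]
    apply Finset.card_bij (fun q _ => q.2)
    · intro q hq
      rw [Finset.mem_filter] at hq
      have := csp_bounds h hq.1
      rw [Finset.mem_Icc]
      omega
    · intro q hq q' hq' heq
      rw [Finset.mem_filter] at hq hq'
      by_contra hne
      exact (h.2.2 q hq.1 q' hq'.1 hne).2.2.2 heq
    · intro e he
      rw [Finset.mem_Icc] at he
      obtain ⟨q, hq, hor⟩ := csp_cover h (by omega) (by omega : e ≤ 2*(3*m+c))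
      have hb := csp_bounds h hq
      have h2 : e = q.2 := by rcases hor with h' | h' <;> omega
      exact ⟨q, Finset.mem_filter.2 ⟨hq, by omega⟩, h2.symm⟩
  have hνcard : ν.card = m := by
    have := Finset.card_filter_add_card_filter_not (s := F)
      (p := fun q => q.2 ≤ 4*m+c)
    rw [csp_card h, ← hν] at this
    omega
  have himg : (ν.image Prod.fst).card = m := by
    rw [Finset.card_image_of_injOn, hνcard]
    intro q hq q' hq' heq
    rw [hν, Finset.mem_coe, Finset.mem_filter] at hq hq'
    by_contra hne
    exact (h.2.2 q hq.1 q' hq'.1 hne).1 heq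
  have hsub : ν.image Prod.fst ⊆ Finset.Icc 1 (2*m+1) := by
    intro o ho
    obtain ⟨q, hq, rfl⟩ := Finset.mem_image.1 ho
    rw [hν, Finset.mem_filter] at hq
    have := csp_bounds h hq.1
    rw [Finset.mem_Icc]
    omega
  have hfe : (Finset.Icc 1 (2*m+1)).filter (fun o => ∀ q ∈ F, q.1 = o → 4*m+c < q.2)
      = Finset.Icc 1 (2*m+1) \ ν.image Prod.fst := by
    ext o
    simp only [Finset.mem_filter, Finset.mem_sdiff, Finset.mem_image, hν, not_exists]
    constructor
    · rintro ⟨hi, hall⟩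
      refine ⟨hi, ?_⟩
      rintro q ⟨⟨hq, hq2⟩, hq1⟩
      exact absurd (hall q hq hq1) (by omega)
    · rintro ⟨hi, hnot⟩
      refine ⟨hi, ?_⟩
      intro q hq hq1
      by_contra hc
      exact hnot q ⟨⟨hq, by omega⟩, hq1⟩
  rw [hfe, Finset.card_sdiff_of_subset hsub, himg, Nat.card_Icc]
  omega
def Psi (m c o : ℕ) (F : Finset (ℕ × ℕ)) : Finset (ℕ × ℕ) :=
  (F.erase (o, 4*m+c+2)).image (fun q => (tau m c o q.1, tau m c o q.2))

def Theta (m c o : ℕ) (F : Finset (ℕ × ℕ)) : Finset (ℕ × ℕ) :=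
  insert (o, 4*m+c+2) (F.image (fun q => (sig m c o q.1, sig m c o q.2)))

lemma sig_ne {m c o y : ℕ} (ho1 : 1 ≤ o) (ho2 : o ≤ 2*m+1) (hy : 1 ≤ y) :
    sig m c o y ≠ o ∧ sig m c o y ≠ 4*m+c+2 := by
  unfold sig; split_ifs <;> omega

lemma tau_inj {m c o x y : ℕ} (ho1 : 1 ≤ o) (ho2 : o ≤ 2*m+1)
    (hx : 1 ≤ x ∧ x ≤ 6*m+2*c+2 ∧ x ≠ o ∧ x ≠ 4*m+c+2)
    (hy : 1 ≤ y ∧ y ≤ 6*m+2*c+2 ∧ y ≠ o ∧ y ≠ 4*m+c+2)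
    (h : tau m c o x = tau m c o y) : x = y := by
  rw [← sig_tau ho1 ho2 hx.1 hx.2.1 hx.2.2.1 hx.2.2.2,
      ← sig_tau ho1 ho2 hy.1 hy.2.1 hy.2.2.1 hy.2.2.2, h]

lemma sig_inj {m c o x y : ℕ} (ho1 : 1 ≤ o) (ho2 : o ≤ 2*m+1)
    (hx : 1 ≤ x ∧ x ≤ 6*m+2*c) (hy : 1 ≤ y ∧ y ≤ 6*m+2*c)
    (h : sig m c o x = sig m c o y) : x = y := by
  rw [← tau_sig ho1 ho2 hx.1 hx.2 (x := x), ← tau_sig ho1 ho2 hy.1 hy.2 (x := y), h]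

lemma image_tau_Icc {m c o : ℕ} (ho1 : 1 ≤ o) (ho2 : o ≤ 2*m+1) :
    ((Finset.Icc 1 (6*m+2*c+2)) \ {o, 4*m+c+2}).image (tau m c o) = Finset.Icc 1 (6*m+2*c) := by
  ext x
  simp only [Finset.mem_image, Finset.mem_sdiff, Finset.mem_Icc, Finset.mem_insert,
    Finset.mem_singleton, not_or]
  constructor
  · rintro ⟨y, ⟨⟨hy1, hy2⟩, hyo, hyP⟩, rfl⟩
    unfold tau; split_ifs <;> omega
  · rintro ⟨hx1, hx2⟩
    refine ⟨sig m c o x, ⟨⟨?_, ?_⟩, ?_, ?_⟩, tau_sig ho1 ho2 hx1 hx2⟩ <;>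
      [skip; skip; exact (sig_ne ho1 ho2 hx1).1; exact (sig_ne ho1 ho2 hx1).2] <;>
      (unfold sig; split_ifs <;> omega)

lemma image_sig_Icc {m c o : ℕ} (ho1 : 1 ≤ o) (ho2 : o ≤ 2*m+1) :
    insert o (insert (4*m+c+2) ((Finset.Icc 1 (6*m+2*c)).image (sig m c o)))
      = Finset.Icc 1 (6*m+2*c+2) := by
  ext x
  simp only [Finset.mem_insert, Finset.mem_image, Finset.mem_Icc]
  constructor
  · rintro (rfl | rfl | ⟨y, ⟨hy1, hy2⟩, rfl⟩)
    · omega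
    · omega
    · unfold sig; split_ifs <;> omega
  · rintro ⟨hx1, hx2⟩
    by_cases hxo : x = o
    · exact Or.inl hxo
    by_cases hxP : x = 4*m+c+2
    · exact Or.inr (Or.inl hxP)
    refine Or.inr (Or.inr ⟨tau m c o x, ⟨?_, ?_⟩, sig_tau ho1 ho2 hx1 hx2 hxo hxP⟩) <;>
      (unfold tau; split_ifs <;> omega)

lemma Psi_mem {m c o : ℕ} {F : Finset (ℕ × ℕ)} (ho1 : 1 ≤ o) (ho2 : o ≤ 2*m+1)
    (h : CSP (3*m+c+1) (2*m+c+1) F) (hoP : (o, 4*m+c+2) ∈ F) :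
    CSP (3*m+c) (2*m+c) (Psi m c o F) ∧ (∀ q ∈ Psi m c o F, q.1 = o → 4*m+c < q.2) := by
  -- facts about chords in the erased set
  have key : ∀ q ∈ F.erase (o, 4*m+c+2),
      (1 ≤ q.1 ∧ q.1 + (2*m+c+1) ≤ q.2 ∧ q.2 ≤ 6*m+2*c+2) ∧
      (q.1 ≠ o ∧ q.1 ≠ 4*m+c+2 ∧ q.2 ≠ o ∧ q.2 ≠ 4*m+c+2) := by
    intro q hq
    rw [Finset.mem_erase] at hq
    have hb := csp_bounds h hq.2
    have hd := h.2.2 q hq.2 (o, 4*m+c+2) hoP hq.1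
    refine ⟨by omega, hd.1, by omega, hd.2.2.1, hd.2.2.2⟩
  refine ⟨⟨?_, ?_, ?_⟩, ?_⟩
  · intro q' hq'
    obtain ⟨q, hq, rfl⟩ := Finset.mem_image.1 hq'
    obtain ⟨hb, hd⟩ := key q hq
    simp only
    unfold tau; split_ifs <;> omega
  · rw [Psi, pts_image, pts_erase h hoP, h.2.1]
    show ((Finset.Icc 1 (2*(3*m+c+1))) \ {o, 4*m+c+2}).image (tau m c o) = _
    rw [show 2*(3*m+c+1) = 6*m+2*c+2 by ring, image_tau_Icc ho1 ho2]
    rw [show 2*(3*m+c) = 6*m+2*c by ring]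
  · intro q' hq' q'' hq'' hne
    obtain ⟨q, hq, rfl⟩ := Finset.mem_image.1 hq'
    obtain ⟨p, hp, rfl⟩ := Finset.mem_image.1 hq''
    have hqp : q ≠ p := by rintro rfl; exact hne rfl
    obtain ⟨hbq, hdq⟩ := key q hq
    obtain ⟨hbp, hdp⟩ := key p hp
    rw [Finset.mem_erase] at hq hp
    have hd := h.2.2 q hq.2 p hp.2 hqp
    simp only
    refine ⟨?_, ?_, ?_, ?_⟩ <;> intro hEq <;>
      [exact hd.1 (tau_inj ho1 ho2 (by omega) (by omega) hEq);
       exact hd.2.1 (tau_inj ho1 ho2 (by omega) (by omega) hEq);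
       exact hd.2.2.1 (tau_inj ho1 ho2 (by omega) (by omega) hEq);
       exact hd.2.2.2 (tau_inj ho1 ho2 (by omega) (by omega) hEq)]
  · intro q' hq' hq'1
    obtain ⟨q, hq, rfl⟩ := Finset.mem_image.1 hq'
    obtain ⟨hb, hd⟩ := key q hq
    simp only at hq'1 ⊢
    unfold tau at hq'1 ⊢; split_ifs at hq'1 ⊢ <;> omega

lemma Theta_mem {m c o : ℕ} {F : Finset (ℕ × ℕ)} (ho1 : 1 ≤ o) (ho2 : o ≤ 2*m+1)
    (h : CSP (3*m+c) (2*m+c) F) (hC : ∀ q ∈ F, q.1 = o → 4*m+c < q.2) :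
    CSP (3*m+c+1) (2*m+c+1) (Theta m c o F) ∧ (o, 4*m+c+2) ∈ Theta m c o F := by
  have key : ∀ q ∈ F, (1 ≤ q.1 ∧ q.1 + (2*m+c) ≤ q.2 ∧ q.2 ≤ 6*m+2*c) ∧
      (q.1 ≠ o ∨ 4*m+c < q.2) := by
    intro q hq
    have hb := csp_bounds h hq
    refine ⟨by omega, ?_⟩
    by_cases hh : q.1 = o
    · exact Or.inr (hC q hq hh)
    · exact Or.inl hh
  refine ⟨⟨?_, ?_, ?_⟩, Finset.mem_insert_self _ _⟩
  · intro q' hq'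
    rcases Finset.mem_insert.1 hq' with rfl | hq'
    · simp only; omega
    · obtain ⟨q, hq, rfl⟩ := Finset.mem_image.1 hq'
      obtain ⟨hb, hc⟩ := key q hq
      simp only
      unfold sig; split_ifs <;> omega
  · rw [Theta, pts_insert, pts_image, h.2.1]
    show insert o (insert (4*m+c+2) ((Finset.Icc 1 (2*(3*m+c))).image (sig m c o))) = _
    rw [show 2*(3*m+c) = 6*m+2*c by ring, image_sig_Icc ho1 ho2]
    rw [show 2*(3*m+c+1) = 6*m+2*c+2 by ring]
  · intro q' hq' q'' hq'' hne
    rcases Finset.mem_insert.1 hq' with rfl | hq' <;>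
      rcases Finset.mem_insert.1 hq'' with rfl | hq''
    · exact absurd rfl hne
    · obtain ⟨q, hq, rfl⟩ := Finset.mem_image.1 hq''
      have hb := (key q hq).1
      have h1 := sig_ne ho1 ho2 (m := m) (c := c) (y := q.1) (by omega)
      have h2 := sig_ne ho1 ho2 (m := m) (c := c) (y := q.2) (by omega)
      simp only
      exact ⟨fun hh => h1.1 hh.symm, fun hh => h2.1 hh.symm,
             fun hh => h1.2 hh.symm, fun hh => h2.2 hh.symm⟩
    · obtain ⟨q, hq, rfl⟩ := Finset.mem_image.1 hq'
      have hb := (key q hq).1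
      have h1 := sig_ne ho1 ho2 (m := m) (c := c) (y := q.1) (by omega)
      have h2 := sig_ne ho1 ho2 (m := m) (c := c) (y := q.2) (by omega)
      simp only
      exact ⟨fun hh => h1.1 hh, fun hh => h1.2 hh, fun hh => h2.1 hh, fun hh => h2.2 hh⟩
    · obtain ⟨q, hq, rfl⟩ := Finset.mem_image.1 hq'
      obtain ⟨p, hp, rfl⟩ := Finset.mem_image.1 hq''
      have hqp : q ≠ p := by rintro rfl; exact hne rfl
      have hbq := (key q hq).1
      have hbp := (key p hp).1
      have hd := h.2.2 q hq p hp hqp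
      simp only
      refine ⟨?_, ?_, ?_, ?_⟩ <;> intro hEq <;>
        [exact hd.1 (sig_inj ho1 ho2 (by omega) (by omega) hEq);
         exact hd.2.1 (sig_inj ho1 ho2 (by omega) (by omega) hEq);
         exact hd.2.2.1 (sig_inj ho1 ho2 (by omega) (by omega) hEq);
         exact hd.2.2.2 (sig_inj ho1 ho2 (by omega) (by omega) hEq)]

lemma Theta_Psi {m c o : ℕ} {F : Finset (ℕ × ℕ)} (ho1 : 1 ≤ o) (ho2 : o ≤ 2*m+1)
    (h : CSP (3*m+c+1) (2*m+c+1) F) (hoP : (o, 4*m+c+2) ∈ F) :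
    Theta m c o (Psi m c o F) = F := by
  rw [Theta, Psi, Finset.image_image]
  have heq : ∀ q ∈ F.erase (o, 4*m+c+2),
      ((fun q : ℕ × ℕ => (sig m c o q.1, sig m c o q.2)) ∘
       (fun q : ℕ × ℕ => (tau m c o q.1, tau m c o q.2))) q = id q := by
    intro q hq
    rw [Finset.mem_erase] at hq
    have hb := csp_bounds h hq.2
    have hd := h.2.2 q hq.2 (o, 4*m+c+2) hoP hq.1
    have hP1 : q.1 ≠ 4*m+c+2 := by omega
    simp only [Function.comp, id]
    rw [sig_tau ho1 ho2 (by omega) (by omega) hd.1 hP1,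
        sig_tau ho1 ho2 (by omega) (by omega) hd.2.2.1 hd.2.2.2]
  rw [Finset.image_congr heq, Finset.image_id, Finset.insert_erase hoP]

lemma Psi_Theta {m c o : ℕ} {F : Finset (ℕ × ℕ)} (ho1 : 1 ≤ o) (ho2 : o ≤ 2*m+1)
    (h : CSP (3*m+c) (2*m+c) F) :
    Psi m c o (Theta m c o F) = F := by
  rw [Theta, Psi, Finset.erase_insert, Finset.image_image]
  · have heq : ∀ q ∈ F,
        ((fun q : ℕ × ℕ => (tau m c o q.1, tau m c o q.2)) ∘
         (fun q : ℕ × ℕ => (sig m c o q.1, sig m c o q.2))) q = id q := by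
      intro q hq
      have hb := csp_bounds h hq
      simp only [Function.comp, id]
      rw [tau_sig ho1 ho2 (by omega) (by omega), tau_sig ho1 ho2 (by omega) (by omega)]
    rw [Finset.image_congr heq, Finset.image_id]
  · intro hmem
    obtain ⟨q, hq, hEq⟩ := Finset.mem_image.1 hmem
    have hb := csp_bounds h hq
    exact (sig_ne ho1 ho2 (m := m) (c := c) (y := q.2) (by omega)).2 (congrArg Prod.snd hEq)
noncomputable def keyF (m c : ℕ) (F : Finset (ℕ × ℕ)) : ℕ :=
  ∑ q ∈ F.filter (fun q => q.2 = 4*m+c+2), q.1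

lemma key_spec {m c : ℕ} {F : Finset (ℕ × ℕ)} (h : CSP (3*m+c+1) (2*m+c+1) F) :
    (keyF m c F, 4*m+c+2) ∈ F ∧ 1 ≤ keyF m c F ∧ keyF m c F ≤ 2*m+1 ∧
      ∀ o', (o', 4*m+c+2) ∈ F → o' = keyF m c F := by
  obtain ⟨q, hq, hq2, huniq⟩ := csp_partner h (p := 4*m+c+2) (by omega)
    (by omega : 4*m+c+2 ≤ 2*(3*m+c+1)) (by omega)
  have hfilt : F.filter (fun q => q.2 = 4*m+c+2) = {q} := by
    ext q'
    rw [Finset.mem_filter, Finset.mem_singleton]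
    constructor
    · rintro ⟨hq', h2⟩; exact huniq q' hq' h2
    · rintro rfl; exact ⟨hq, hq2⟩
  have hkey : keyF m c F = q.1 := by rw [keyF, hfilt, Finset.sum_singleton]
  have hb := csp_bounds h hq
  have hqeq : q = (keyF m c F, 4*m+c+2) := by
    rw [hkey]; exact Prod.ext rfl hq2
  refine ⟨hqeq ▸ hq, by omega, by omega, ?_⟩
  intro o' ho'
  have h' := congrArg Prod.fst (huniq _ ho' rfl)
  simpa [hkey] using h'

lemma fiber_card (m c o : ℕ) (ho1 : 1 ≤ o) (ho2 : o ≤ 2*m+1) :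
    ((CSF (3*m+c+1) (2*m+c+1)).filter (fun F => keyF m c F = o)).card =
    ((CSF (3*m+c) (2*m+c)).filter (fun F => ∀ q ∈ F, q.1 = o → 4*m+c < q.2)).card := by
  apply Finset.card_nbij' (Psi m c o) (Theta m c o)
  · intro F hF
    rw [Finset.mem_coe, Finset.mem_filter] at hF
    obtain ⟨hF, hkey⟩ := hF
    have h := mem_CSF.1 hF
    have hoP : (o, 4*m+c+2) ∈ F := by
      have := (key_spec h).1
      rwa [hkey] at this
    obtain ⟨h1, h2⟩ := Psi_mem ho1 ho2 h hoP
    exact Finset.mem_filter.2 ⟨mem_CSF.2 h1, h2⟩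
  · intro F hF
    rw [Finset.mem_coe, Finset.mem_filter] at hF
    obtain ⟨hF, hC⟩ := hF
    have h := mem_CSF.1 hF
    obtain ⟨h1, h2⟩ := Theta_mem ho1 ho2 h hC
    refine Finset.mem_filter.2 ⟨mem_CSF.2 h1, ?_⟩
    exact ((key_spec h1).2.2.2 o h2).symm
  · intro F hF
    rw [Finset.mem_coe, Finset.mem_filter] at hF
    have h := mem_CSF.1 hF.1
    have hoP : (o, 4*m+c+2) ∈ F := by
      have := (key_spec h).1
      rwa [hF.2] at this
    exact Theta_Psi ho1 ho2 h hoP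
  · intro F hF
    rw [Finset.mem_coe, Finset.mem_filter] at hF
    exact Psi_Theta ho1 ho2 (mem_CSF.1 hF.1)

lemma sum_comm_filter {α β : Type*} (s : Finset α) (t : Finset β) (C : α → β → Prop)
    [∀ a b, Decidable (C a b)] :
    (∑ a ∈ s, (t.filter (fun b => C a b)).card) = ∑ b ∈ t, (s.filter (fun a => C a b)).card := by
  simp only [Finset.card_filter]
  exact Finset.sum_comm

lemma card_step (m c : ℕ) :
    (CSF (3*m+c+1) (2*m+c+1)).card = (m+1) * (CSF (3*m+c) (2*m+c)).card := by
  have h1 : (CSF (3*m+c+1) (2*m+c+1)).card =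
      ∑ o ∈ Finset.Icc 1 (2*m+1), ((CSF (3*m+c+1) (2*m+c+1)).filter (fun F => keyF m c F = o)).card := by
    apply Finset.card_eq_sum_card_fiberwise
    intro F hF
    have := key_spec (mem_CSF.1 hF)
    rw [Finset.mem_coe, Finset.mem_Icc]
    exact ⟨this.2.1, this.2.2.1⟩
  calc (CSF (3*m+c+1) (2*m+c+1)).card
      = ∑ o ∈ Finset.Icc 1 (2*m+1),
          ((CSF (3*m+c+1) (2*m+c+1)).filter (fun F => keyF m c F = o)).card := h1
    _ = ∑ o ∈ Finset.Icc 1 (2*m+1),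
          ((CSF (3*m+c) (2*m+c)).filter (fun F => ∀ q ∈ F, q.1 = o → 4*m+c < q.2)).card :=
        Finset.sum_congr rfl (fun o ho => by
          rw [Finset.mem_Icc] at ho
          exact fiber_card m c o ho.1 ho.2)
    _ = ∑ F ∈ CSF (3*m+c) (2*m+c),
          ((Finset.Icc 1 (2*m+1)).filter (fun o => ∀ q ∈ F, q.1 = o → 4*m+c < q.2)).card :=
        sum_comm_filter _ _ _
    _ = ∑ _F ∈ CSF (3*m+c) (2*m+c), (m+1) :=
        Finset.sum_congr rfl (fun F hF => count_avail (mem_CSF.1 hF))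
    _ = (m+1) * (CSF (3*m+c) (2*m+c)).card := by
        rw [Finset.sum_const, smul_eq_mul, mul_comm]
theorem stmt_8 (n k : ℕ) (hn : 1 ≤ n) (hk : 1 ≤ k) (hkn : k ≤ n) (h3 : 3 * (n - k) ≤ n) :
    Nat.card (LCD (n + 1) (k + 1)) = (n - k + 1) * Nat.card (LCD n k) := by
  set m := n - k with hm
  set c := n - 3*m with hc
  have hn' : n = 3*m + c := by omega
  have hk' : k = 2*m + c := by omega
  have h1 : n + 1 = 3*m + c + 1 := by omega
  have h2 : k + 1 = 2*m + c + 1 := by omega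
  rw [card_LCD, card_LCD, h1, h2, hn', hk', card_step]
end

section
/- Define a_1 = 0, a_2 = 1, and a_n = (2n-1)a_{n-1} + a_{n-2} for n ≥ 3. Then for all n ≥ 1, a_n equals the number of linear chord diagrams of size n in which every chord has length at least 2. -/
open Finset

/-- Generalized chord diagrams on `{1,...,M}`: every part is a pair `{s,e}` which either has
length `≥ 2` or belongs to the exception set `E`. -/
def Chords (M : ℕ) (E : Finset (Finset ℕ)) : Set (Finpartition (Finset.Icc 1 M)) :=
  {P | ∀ p ∈ P.parts, ∃ s e : ℕ, s < e ∧ p = {s, e} ∧ (2 ≤ e - s ∨ p ∈ E)}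

noncomputable def Ac (m : ℕ) : ℕ := Nat.card (Chords (2*m) ∅)
noncomputable def Cc (m p : ℕ) : ℕ := Nat.card (Chords (2*m) {({p, p+1} : Finset ℕ)})

lemma pair_inj {a b c d : ℕ} (h1 : a < b) (h2 : c < d) :
    ({a,b} : Finset ℕ) = {c,d} ↔ a = c ∧ b = d := by
  constructor
  · intro h
    have ha : a = c ∨ a = d := by
      have : a ∈ ({c,d} : Finset ℕ) := h ▸ Finset.mem_insert_self a {b}
      simpa using this
    have hb : b = c ∨ b = d := by
      have : b ∈ ({c,d} : Finset ℕ) := h ▸ Finset.mem_insert_of_mem (Finset.mem_singleton_self b)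
      simpa using this
    have hc : c = a ∨ c = b := by
      have : c ∈ ({a,b} : Finset ℕ) := h ▸ Finset.mem_insert_self c {d}
      simpa using this
    omega
  · rintro ⟨rfl, rfl⟩; rfl

section Del

variable (u v : ℕ)

def rmap (x : ℕ) : ℕ := if x < u then x else if x < v then x - 1 else x - 2
def lmap (y : ℕ) : ℕ := if y < u then y else if y + 1 < v then y + 1 else y + 2

variable {M u v : ℕ}

lemma rmap_mem (hu : 1 ≤ u) (huv : u < v) (hv : v ≤ M) {x : ℕ}
    (h1 : 1 ≤ x) (h2 : x ≤ M) (h3 : x ≠ u) (h4 : x ≠ v) :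
    1 ≤ rmap u v x ∧ rmap u v x ≤ M - 2 := by
  unfold rmap; split_ifs <;> omega

lemma lmap_mem (hu : 1 ≤ u) (huv : u < v) (hv : v ≤ M) {y : ℕ}
    (h1 : 1 ≤ y) (h2 : y ≤ M - 2) :
    1 ≤ lmap u v y ∧ lmap u v y ≤ M ∧ lmap u v y ≠ u ∧ lmap u v y ≠ v := by
  unfold lmap; split_ifs <;> omega

lemma lmap_rmap (hu : 1 ≤ u) (huv : u < v) {x : ℕ}
    (h1 : 1 ≤ x) (h3 : x ≠ u) (h4 : x ≠ v) :
    lmap u v (rmap u v x) = x := by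
  unfold rmap lmap; split_ifs <;> omega

lemma rmap_lmap (hu : 1 ≤ u) (huv : u < v) {y : ℕ} :
    rmap u v (lmap u v y) = y := by
  unfold rmap lmap; split_ifs <;> omega

lemma rmap_lt (huv : u < v) {x y : ℕ} (hx : x ≠ u) (hx' : x ≠ v) (hy : y ≠ u) (hy' : y ≠ v)
    (hxy : x < y) : rmap u v x < rmap u v y := by
  unfold rmap; split_ifs <;> omega

lemma lmap_lt (huv : u < v) {x y : ℕ} (hxy : x < y) : lmap u v x < lmap u v y := by
  unfold lmap; split_ifs <;> omega

lemma image_pair (f : ℕ → ℕ) (a b : ℕ) : ({a, b} : Finset ℕ).image f = {f a, f b} := by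
  simp

lemma u_mem_pair : u ∈ ({u, v} : Finset ℕ) := Finset.mem_insert_self _ _
lemma v_mem_pair : v ∈ ({u, v} : Finset ℕ) :=
  Finset.mem_insert_of_mem (Finset.mem_singleton_self _)

lemma erase_part_bounds (P : Finpartition (Finset.Icc 1 M))
    (hm : ({u,v} : Finset ℕ) ∈ P.parts)
    {q : Finset ℕ} (hq : q ∈ P.parts.erase {u,v}) {x : ℕ} (hx : x ∈ q) :
    1 ≤ x ∧ x ≤ M ∧ x ≠ u ∧ x ≠ v := by
  have hq' := Finset.mem_of_mem_erase hq
  have hne := Finset.ne_of_mem_erase hq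
  have hb := P.le hq' hx
  rw [Finset.mem_Icc] at hb
  refine ⟨hb.1, hb.2, ?_, ?_⟩
  · rintro rfl
    exact hne (P.eq_of_mem_parts hq' hm hx u_mem_pair)
  · rintro rfl
    exact hne (P.eq_of_mem_parts hq' hm hx v_mem_pair)

lemma part_bounds' (Q : Finpartition (Finset.Icc 1 (M-2))) {q : Finset ℕ}
    (hq : q ∈ Q.parts) {x : ℕ} (hx : x ∈ q) : 1 ≤ x ∧ x ≤ M - 2 := by
  have := Q.le hq hx
  rwa [Finset.mem_Icc] at this

/-- Deleting the chord `{u,v}` from a partition and relabelling. -/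
def delP (hu : 1 ≤ u) (huv : u < v) (hv : v ≤ M) (P : Finpartition (Finset.Icc 1 M))
    (hm : ({u,v} : Finset ℕ) ∈ P.parts) : Finpartition (Finset.Icc 1 (M-2)) where
  parts := (P.parts.erase {u,v}).image (fun q => q.image (rmap u v))
  supIndep := by
    rw [Finset.supIndep_iff_pairwiseDisjoint]
    intro a ha b hb hab
    simp only [Finset.coe_image, Set.mem_image, Finset.mem_coe] at ha hb
    obtain ⟨q1, hq1, rfl⟩ := ha
    obtain ⟨q2, hq2, rfl⟩ := hb
    simp only [id_eq, Finset.disjoint_left]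
    intro x hx1 hx2
    obtain ⟨x1, hx1q, rfl⟩ := Finset.mem_image.1 hx1
    obtain ⟨x2, hx2q, hx12⟩ := Finset.mem_image.1 hx2
    have b1 := erase_part_bounds P hm hq1 hx1q
    have b2 := erase_part_bounds P hm hq2 hx2q
    have hx21 : x2 = x1 := by
      have := congrArg (lmap u v) hx12
      rwa [lmap_rmap hu huv b2.1 b2.2.2.1 b2.2.2.2,
        lmap_rmap hu huv b1.1 b1.2.2.1 b1.2.2.2] at this
    subst hx21
    exact hab (congrArg (Finset.image (rmap u v))
      (P.eq_of_mem_parts (Finset.mem_of_mem_erase hq1) (Finset.mem_of_mem_erase hq2) hx1q hx2q))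
  sup_parts := by
    ext a
    constructor
    · intro h
      obtain ⟨q', hq', ha⟩ := Finset.mem_sup.1 h
      obtain ⟨q, hq, rfl⟩ := Finset.mem_image.1 hq'
      obtain ⟨x, hx, rfl⟩ := Finset.mem_image.1 ha
      have b := erase_part_bounds P hm hq hx
      have := rmap_mem hu huv hv b.1 b.2.1 b.2.2.1 b.2.2.2
      exact Finset.mem_Icc.2 this
    · intro h
      rw [Finset.mem_Icc] at h
      have hx' := lmap_mem hu huv hv (v := v) h.1 h.2
      have hxg : lmap u v a ∈ Finset.Icc 1 M := Finset.mem_Icc.2 ⟨hx'.1, hx'.2.1⟩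
      obtain ⟨q, hq, hxq⟩ := P.exists_mem hxg
      have hqne : q ≠ {u,v} := by
        rintro rfl
        rcases Finset.mem_insert.1 hxq with h'' | h''
        · exact hx'.2.2.1 h''
        · exact hx'.2.2.2 (Finset.mem_singleton.1 h'')
      refine Finset.mem_sup.2 ⟨q.image (rmap u v),
        Finset.mem_image_of_mem _ (Finset.mem_erase.2 ⟨hqne, hq⟩), ?_⟩
      exact Finset.mem_image.2 ⟨lmap u v a, hxq, rmap_lmap hu huv⟩
  bot_notMem := by
    intro h
    obtain ⟨q, hq, hq0⟩ := Finset.mem_image.1 h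
    have hne := P.nonempty_of_mem_parts (Finset.mem_of_mem_erase hq)
    rw [show (⊥ : Finset ℕ) = ∅ from rfl, Finset.image_eq_empty] at hq0
    exact hne.ne_empty hq0

/-- Inserting the chord `{u,v}` into a partition after relabelling. -/
def insP (hu : 1 ≤ u) (huv : u < v) (hv : v ≤ M) (Q : Finpartition (Finset.Icc 1 (M-2))) :
    Finpartition (Finset.Icc 1 M) where
  parts := insert ({u,v} : Finset ℕ) (Q.parts.image (fun q => q.image (lmap u v)))
  supIndep := by
    rw [Finset.supIndep_iff_pairwiseDisjoint]
    intro a ha b hb hab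
    simp only [Finset.coe_insert, Set.mem_insert_iff, Finset.coe_image, Set.mem_image,
      Finset.mem_coe] at ha hb
    have key : ∀ q ∈ Q.parts, Disjoint ({u,v} : Finset ℕ) (q.image (lmap u v)) := by
      intro q hq
      rw [Finset.disjoint_left]
      intro x hxp hxi
      obtain ⟨y, hy, rfl⟩ := Finset.mem_image.1 hxi
      have b := part_bounds' Q hq hy
      have := lmap_mem hu huv hv b.1 b.2
      rcases Finset.mem_insert.1 hxp with h'' | h''
      · exact this.2.2.1 h''
      · exact this.2.2.2 (Finset.mem_singleton.1 h'')
    rcases ha with rfl | ⟨q1, hq1, rfl⟩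
    · rcases hb with rfl | ⟨q2, hq2, rfl⟩
      · exact absurd rfl hab
      · exact key q2 hq2
    · rcases hb with rfl | ⟨q2, hq2, rfl⟩
      · exact (key q1 hq1).symm
      · simp only [id_eq, Finset.disjoint_left]
        intro x hx1 hx2
        obtain ⟨x1, hx1q, rfl⟩ := Finset.mem_image.1 hx1
        obtain ⟨x2, hx2q, hx12⟩ := Finset.mem_image.1 hx2
        have hx21 : x2 = x1 := by
          have := congrArg (rmap u v) hx12
          rwa [rmap_lmap hu huv, rmap_lmap hu huv] at this
        subst hx21
        exact hab (congrArg (Finset.image (lmap u v))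
          (Q.eq_of_mem_parts hq1 hq2 hx1q hx2q))
  sup_parts := by
    ext a
    rw [Finset.mem_sup]
    constructor
    · rintro ⟨q', hq', ha⟩
      rcases Finset.mem_insert.1 hq' with rfl | hq''
      · rcases Finset.mem_insert.1 ha with rfl | ha'
        · exact Finset.mem_Icc.2 ⟨hu, le_of_lt (lt_of_lt_of_le huv hv)⟩
        · rw [Finset.mem_singleton.1 ha']
          exact Finset.mem_Icc.2 ⟨le_of_lt (lt_of_le_of_lt hu huv), hv⟩
      · obtain ⟨q, hq, rfl⟩ := Finset.mem_image.1 hq''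
        obtain ⟨x, hx, rfl⟩ := Finset.mem_image.1 ha
        have b := part_bounds' Q hq hx
        have := lmap_mem hu huv hv b.1 b.2
        exact Finset.mem_Icc.2 ⟨this.1, this.2.1⟩
    · intro h
      rw [Finset.mem_Icc] at h
      by_cases hau : a = u
      · exact ⟨{u,v}, Finset.mem_insert_self _ _, by rw [hau]; exact u_mem_pair⟩
      by_cases hav : a = v
      · exact ⟨{u,v}, Finset.mem_insert_self _ _, by rw [hav]; exact v_mem_pair⟩
      have hr := rmap_mem hu huv hv h.1 h.2 hau hav
      obtain ⟨q, hq, hxq⟩ := Q.exists_mem (Finset.mem_Icc.2 hr)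
      exact ⟨q.image (lmap u v),
        Finset.mem_insert_of_mem (Finset.mem_image_of_mem _ hq),
        Finset.mem_image.2 ⟨rmap u v a, hxq, lmap_rmap hu huv h.1 hau hav⟩⟩
  bot_notMem := by
    intro h
    rcases Finset.mem_insert.1 h with h' | h'
    · exact absurd h'.symm (Finset.ne_empty_of_mem u_mem_pair)
    · obtain ⟨q, hq, hq0⟩ := Finset.mem_image.1 h'
      have hne := Q.nonempty_of_mem_parts hq
      rw [show (⊥ : Finset ℕ) = ∅ from rfl, Finset.image_eq_empty] at hq0
      exact hne.ne_empty hq0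

lemma delP_mem (hu : 1 ≤ u) (huv : u < v) (hv : v ≤ M) {E E' : Finset (Finset ℕ)}
    (H : ∀ s e : ℕ, 1 ≤ s → e ≤ M → s < e → s ≠ u → s ≠ v → e ≠ u → e ≠ v →
      ((2 ≤ e - s ∨ ({s,e} : Finset ℕ) ∈ E) ↔
       (2 ≤ rmap u v e - rmap u v s ∨ ({rmap u v s, rmap u v e} : Finset ℕ) ∈ E')))
    {P : Finpartition (Finset.Icc 1 M)} (hP : P ∈ Chords M E)
    (hm : ({u,v} : Finset ℕ) ∈ P.parts) :
    delP hu huv hv P hm ∈ Chords (M-2) E' := by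
  simp only [Chords, Set.mem_setOf_eq] at hP ⊢
  intro p hp
  obtain ⟨q, hq, rfl⟩ := Finset.mem_image.1 hp
  obtain ⟨s, e, hse, rfl, hval⟩ := hP q (Finset.mem_of_mem_erase hq)
  have bs := erase_part_bounds P hm hq (Finset.mem_insert_self s {e})
  have be := erase_part_bounds P hm hq (Finset.mem_insert_of_mem (Finset.mem_singleton_self e))
  rw [image_pair (rmap u v) s e]
  refine ⟨rmap u v s, rmap u v e,
    rmap_lt huv bs.2.2.1 bs.2.2.2 be.2.2.1 be.2.2.2 hse, rfl, ?_⟩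
  exact (H s e bs.1 be.2.1 hse bs.2.2.1 bs.2.2.2 be.2.2.1 be.2.2.2).1 hval

lemma insP_mem (hu : 1 ≤ u) (huv : u < v) (hv : v ≤ M) {E E' : Finset (Finset ℕ)}
    (hpair : 2 ≤ v - u ∨ ({u,v} : Finset ℕ) ∈ E)
    (H : ∀ s e : ℕ, 1 ≤ s → e ≤ M → s < e → s ≠ u → s ≠ v → e ≠ u → e ≠ v →
      ((2 ≤ e - s ∨ ({s,e} : Finset ℕ) ∈ E) ↔
       (2 ≤ rmap u v e - rmap u v s ∨ ({rmap u v s, rmap u v e} : Finset ℕ) ∈ E')))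
    {Q : Finpartition (Finset.Icc 1 (M-2))} (hQ : Q ∈ Chords (M-2) E') :
    insP hu huv hv Q ∈ Chords M E ∧ ({u,v} : Finset ℕ) ∈ (insP hu huv hv Q).parts := by
  simp only [Chords, Set.mem_setOf_eq] at hQ ⊢
  constructor
  · intro p hp
    rcases Finset.mem_insert.1 hp with rfl | hp'
    · exact ⟨u, v, huv, rfl, hpair⟩
    · obtain ⟨q, hq, rfl⟩ := Finset.mem_image.1 hp'
      obtain ⟨s, e, hse, rfl, hval⟩ := hQ q hq
      have bs := part_bounds' Q hq (Finset.mem_insert_self s {e})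
      have be := part_bounds' Q hq (Finset.mem_insert_of_mem (Finset.mem_singleton_self e))
      have ms := lmap_mem hu huv hv bs.1 bs.2
      have me := lmap_mem hu huv hv be.1 be.2
      rw [image_pair (lmap u v) s e]
      refine ⟨lmap u v s, lmap u v e, lmap_lt huv hse, rfl, ?_⟩
      have := H (lmap u v s) (lmap u v e) ms.1 me.2.1 (lmap_lt huv hse)
        ms.2.2.1 ms.2.2.2 me.2.2.1 me.2.2.2
      rw [rmap_lmap hu huv, rmap_lmap hu huv] at this
      exact this.2 hval
  · exact Finset.mem_insert_self _ _

theorem del_card (hu : 1 ≤ u) (huv : u < v) (hv : v ≤ M)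
    (E E' : Finset (Finset ℕ))
    (hpair : 2 ≤ v - u ∨ ({u,v} : Finset ℕ) ∈ E)
    (H : ∀ s e : ℕ, 1 ≤ s → e ≤ M → s < e → s ≠ u → s ≠ v → e ≠ u → e ≠ v →
      ((2 ≤ e - s ∨ ({s,e} : Finset ℕ) ∈ E) ↔
       (2 ≤ rmap u v e - rmap u v s ∨ ({rmap u v s, rmap u v e} : Finset ℕ) ∈ E'))) :
    Nat.card ({P | P ∈ Chords M E ∧ ({u,v} : Finset ℕ) ∈ P.parts} :
        Set (Finpartition (Finset.Icc 1 M)))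
      = Nat.card (Chords (M - 2) E') := by
  refine Nat.card_congr ⟨fun P => ⟨delP hu huv hv P.1 P.2.2, delP_mem hu huv hv H P.2.1 P.2.2⟩,
    fun Q => ⟨insP hu huv hv Q.1, insP_mem hu huv hv hpair H Q.2⟩, ?_, ?_⟩
  · rintro ⟨P, hP, hm⟩
    apply Subtype.ext
    apply Finpartition.ext
    show insert ({u,v} : Finset ℕ)
      (((P.parts.erase {u,v}).image (fun q => q.image (rmap u v))).image
        (fun q => q.image (lmap u v))) = P.parts
    rw [Finset.image_image]
    have hcongr : (P.parts.erase {u,v}).image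
        ((fun q => Finset.image (lmap u v) q) ∘ (fun q => Finset.image (rmap u v) q))
        = (P.parts.erase {u,v}).image id := by
      apply Finset.image_congr
      intro q hq
      rw [Finset.mem_coe] at hq
      simp only [Function.comp_apply, id_eq, Finset.image_image]
      have : ∀ x ∈ q, (lmap u v ∘ rmap u v) x = x := by
        intro x hx
        have b := erase_part_bounds P hm hq hx
        exact lmap_rmap hu huv b.1 b.2.2.1 b.2.2.2
      rw [Finset.image_congr this, Finset.image_id']
    rw [hcongr, Finset.image_id, Finset.insert_erase hm]
  · rintro ⟨Q, hQ⟩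
    apply Subtype.ext
    apply Finpartition.ext
    show ((insert ({u,v} : Finset ℕ) (Q.parts.image (fun q => q.image (lmap u v)))).erase
      {u,v}).image (fun q => q.image (rmap u v)) = Q.parts
    have hnotmem : ({u,v} : Finset ℕ) ∉ Q.parts.image (fun q => q.image (lmap u v)) := by
      intro h
      obtain ⟨q, hq, hq'⟩ := Finset.mem_image.1 h
      have : u ∈ q.image (lmap u v) := hq' ▸ u_mem_pair
      obtain ⟨y, hy, hy'⟩ := Finset.mem_image.1 this
      have b := part_bounds' Q hq hy
      exact (lmap_mem hu huv hv b.1 b.2).2.2.1 hy'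
    rw [Finset.erase_insert hnotmem, Finset.image_image]
    have hcongr : Q.parts.image
        ((fun q => Finset.image (rmap u v) q) ∘ (fun q => Finset.image (lmap u v) q))
        = Q.parts.image id := by
      apply Finset.image_congr
      intro q hq
      simp only [Function.comp_apply, id_eq, Finset.image_image]
      have : ∀ x ∈ q, (rmap u v ∘ lmap u v) x = x := fun x _ => rmap_lmap hu huv
      rw [Finset.image_congr this, Finset.image_id']
    rw [hcongr, Finset.image_id]

end Del


lemma ncard_biUnion {X : Type*} [Finite X] (J : Finset ℕ) (f : ℕ → Set X)
    (hd : ∀ i ∈ J, ∀ j ∈ J, i ≠ j → Disjoint (f i) (f j)) :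
    (⋃ j ∈ J, f j).ncard = ∑ j ∈ J, (f j).ncard := by
  classical
  induction J using Finset.induction_on with
  | empty => simp
  | @insert a J ha ih =>
    rw [Finset.set_biUnion_insert, Finset.sum_insert ha,
      Set.ncard_union_eq ?_ (Set.toFinite _) (Set.toFinite _),
      ih (fun i hi j hj hij => hd i (Finset.mem_insert_of_mem hi) j
        (Finset.mem_insert_of_mem hj) hij)]
    simp only [Set.disjoint_iUnion_right]
    intro i hi
    exact hd a (Finset.mem_insert_self a J) i (Finset.mem_insert_of_mem hi)
      (fun h => ha (h ▸ hi))

lemma chords_exc_irrelevant {M x y : ℕ} (h : x < 1 ∨ M < y) :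
    Chords M {({x,y} : Finset ℕ)} = Chords M ∅ := by
  ext P
  simp only [Chords, Set.mem_setOf_eq, Finset.mem_singleton, Finset.notMem_empty, or_false]
  constructor
  · intro hP p hp
    obtain ⟨s, e, hse, hpe, hval⟩ := hP p hp
    refine ⟨s, e, hse, hpe, ?_⟩
    rcases hval with h2 | hE
    · exact h2
    · exfalso
      have hx : x ∈ p := hE ▸ Finset.mem_insert_self x {y}
      have hy : y ∈ p := hE ▸ Finset.mem_insert_of_mem (Finset.mem_singleton_self y)
      have hx' := Finset.mem_Icc.1 (P.le hp hx)
      have hy' := Finset.mem_Icc.1 (P.le hp hy)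
      omega
  · intro hP p hp
    obtain ⟨s, e, hse, hpe, h2⟩ := hP p hp
    exact ⟨s, e, hse, hpe, Or.inl h2⟩

lemma Ac_zero : Ac 0 = 1 := by
  unfold Ac
  have hbot : (⊥ : Finset ℕ) = Finset.Icc 1 (2*0) := by simp
  haveI : Unique (Finpartition (Finset.Icc 1 (2*0))) := hbot ▸ inferInstance
  have huniv : Chords (2*0) ∅ = Set.univ := by
    ext P
    simp only [Chords, Set.mem_setOf_eq, Set.mem_univ, iff_true]
    intro p hp
    exfalso
    obtain ⟨x, hx⟩ := P.nonempty_of_mem_parts hp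
    have := P.le hp hx
    simp at this
  rw [huniv, Nat.card_congr (Equiv.Set.univ _), Nat.card_unique]

lemma key1 (n : ℕ) (hn : 1 ≤ n) :
    Ac n = ∑ j ∈ Finset.Icc 1 (2*n-2), Cc (n-1) (j-1) := by
  classical
  unfold Ac
  have hcover : Chords (2*n) ∅ = ⋃ j ∈ Finset.Icc 1 (2*n-2),
      {P | P ∈ Chords (2*n) ∅ ∧ ({j, 2*n} : Finset ℕ) ∈ P.parts} := by
    ext P
    simp only [Set.mem_iUnion, Set.mem_setOf_eq, exists_prop]
    constructor
    · intro hP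
      have h2n : (2*n) ∈ Finset.Icc 1 (2*n) := by
        rw [Finset.mem_Icc]; omega
      obtain ⟨q, hq, h2q⟩ := P.exists_mem h2n
      obtain ⟨s, e, hse, hqe, hval⟩ := hP q hq
      replace hval : 2 ≤ e - s := by simpa using hval
      have hs : s ∈ Finset.Icc 1 (2*n) := P.le hq (hqe ▸ Finset.mem_insert_self s {e})
      have he : e ∈ Finset.Icc 1 (2*n) :=
        P.le hq (hqe ▸ Finset.mem_insert_of_mem (Finset.mem_singleton_self e))
      rw [Finset.mem_Icc] at hs he
      have h2q' : 2*n = s ∨ 2*n = e := by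
        rw [hqe] at h2q
        simpa using h2q
      have he2n : e = 2*n := by omega
      subst he2n
      exact ⟨s, by rw [Finset.mem_Icc]; omega, hP, hqe ▸ hq⟩
    · rintro ⟨j, hj, hP, hm⟩
      exact hP
  rw [hcover, Nat.card_coe_set_eq, ncard_biUnion]
  · apply Finset.sum_congr rfl
    intro j hj
    rw [Finset.mem_Icc] at hj
    rw [← Nat.card_coe_set_eq]
    have hdel := del_card (u := j) (v := 2*n) (M := 2*n) (by omega) (by omega) le_rfl
      ∅ {({j-1, j} : Finset ℕ)} (Or.inl (by omega)) ?_
    · rw [hdel]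
      unfold Cc
      rw [show 2*(n-1) = 2*n-2 from by omega, show (j-1)+1 = j from by omega]
    · intro s e hs he hse hsu hsv heu hev
      simp only [Finset.notMem_empty, or_false, Finset.mem_singleton]
      rw [pair_inj (rmap_lt (by omega) hsu hsv heu hev hse) (by omega)]
      unfold rmap
      split_ifs <;> omega
  · intro i hi j hj hij
    rw [Finset.mem_Icc] at hi hj
    rw [Set.disjoint_left]
    rintro P ⟨hP, hmi⟩ ⟨-, hmj⟩
    have : ({i, 2*n} : Finset ℕ) = {j, 2*n} :=
      P.eq_of_mem_parts hmi hmj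
        (Finset.mem_insert_of_mem (Finset.mem_singleton_self _))
        (Finset.mem_insert_of_mem (Finset.mem_singleton_self _))
    rw [pair_inj (by omega) (by omega)] at this
    exact hij this.1

lemma key2 (m p : ℕ) (hp : 1 ≤ p) (hp2 : p + 1 ≤ 2*m) :
    Cc m p = Ac m + Cc (m-1) (p-1) := by
  classical
  unfold Cc
  have hsplit : Chords (2*m) {({p, p+1} : Finset ℕ)} =
      (Chords (2*m) ∅) ∪ {P | P ∈ Chords (2*m) {({p, p+1} : Finset ℕ)} ∧
        ({p,p+1} : Finset ℕ) ∈ P.parts} := by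
    ext P
    simp only [Chords, Set.mem_setOf_eq, Set.mem_union, Finset.mem_singleton,
      Finset.notMem_empty, or_false]
    constructor
    · intro hP
      by_cases hm : ({p,p+1} : Finset ℕ) ∈ P.parts
      · exact Or.inr ⟨hP, hm⟩
      · left
        intro q hq
        obtain ⟨s, e, hse, hqe, hval⟩ := hP q hq
        refine ⟨s, e, hse, hqe, ?_⟩
        rcases hval with h2 | hE
        · exact h2
        · exact absurd (hE ▸ hq) hm
    · rintro (hP | ⟨hP, -⟩)
      · intro q hq
        obtain ⟨s, e, hse, hqe, h2⟩ := hP q hq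
        exact ⟨s, e, hse, hqe, Or.inl h2⟩
      · exact hP
  have hdisj : Disjoint (Chords (2*m) ∅)
      {P | P ∈ Chords (2*m) {({p, p+1} : Finset ℕ)} ∧ ({p,p+1} : Finset ℕ) ∈ P.parts} := by
    rw [Set.disjoint_left]
    rintro P hP ⟨-, hm⟩
    obtain ⟨s, e, hse, hqe, hval⟩ := hP _ hm
    replace hval : 2 ≤ e - s := by simpa using hval
    rw [pair_inj (by omega) hse] at hqe
    omega
  rw [hsplit, Nat.card_coe_set_eq,
    Set.ncard_union_eq hdisj (Set.toFinite _) (Set.toFinite _)]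
  have hB : ({P | P ∈ Chords (2*m) {({p, p+1} : Finset ℕ)} ∧
      ({p,p+1} : Finset ℕ) ∈ P.parts} : Set (Finpartition (Finset.Icc 1 (2*m)))).ncard
      = Cc (m-1) (p-1) := by
    rw [← Nat.card_coe_set_eq]
    have hdel := del_card (u := p) (v := p+1) (M := 2*m) hp (by omega) (by omega)
      {({p, p+1} : Finset ℕ)} {({p-1, p} : Finset ℕ)}
      (Or.inr (Finset.mem_singleton_self _)) ?_
    · rw [hdel]
      unfold Cc
      rw [show 2*(m-1) = 2*m-2 from by omega, show (p-1)+1 = p from by omega]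
    · intro s e hs he hse hsu hsv heu hev
      simp only [Finset.mem_singleton]
      rw [pair_inj hse (by omega),
        pair_inj (rmap_lt (by omega) hsu hsv heu hev hse) (show p-1 < p from by omega)]
      unfold rmap
      split_ifs <;> omega
  rw [hB]
  have hA : (Chords (2*m) ∅).ncard = Ac m := by
    rw [← Nat.card_coe_set_eq]
    rfl
  rw [hA]
  rfl

lemma key3 (m : ℕ) : Cc m 0 = Ac m := by
  unfold Cc Ac
  rw [chords_exc_irrelevant (Or.inl one_pos)]

lemma key3b (m p : ℕ) (hp : 2*m ≤ p) : Cc m p = Ac m := by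
  unfold Cc Ac
  rw [chords_exc_irrelevant (Or.inr (by omega))]

lemma Ac_one : Ac 1 = 0 := by
  rw [key1 1 le_rfl]
  simp

lemma Ac_two : Ac 2 = 1 := by
  rw [key1 2 (by norm_num)]
  rw [show Finset.Icc 1 (2*2-2) = {1, 2} from by decide]
  rw [Finset.sum_insert (by decide), Finset.sum_singleton]
  norm_num
  rw [key3, key2 1 1 le_rfl (by norm_num), key3, Ac_one, Ac_zero]

lemma Ac_rec (n : ℕ) (hn : 3 ≤ n) : Ac n = (2*n-1) * Ac (n-1) + Ac (n-2) := by
  have h1 : Finset.Icc 1 (2*n-2) = insert 1 (Finset.Icc 2 (2*n-2)) := by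
    ext j
    simp only [Finset.mem_Icc, Finset.mem_insert]
    omega
  rw [key1 n (by omega), h1, Finset.sum_insert (by simp)]
  rw [show (1:ℕ) - 1 = 0 from rfl, key3]
  have hterm : ∀ j ∈ Finset.Icc 2 (2*n-2), Cc (n-1) (j-1) = Ac (n-1) + Cc (n-2) (j-2) := by
    intro j hj
    simp only [Finset.mem_Icc] at hj
    rw [key2 (n-1) (j-1) (by omega) (by omega),
      show n-1-1 = n-2 from by omega, show j-1-1 = j-2 from by omega]
  rw [Finset.sum_congr rfl hterm, Finset.sum_add_distrib, Finset.sum_const, Nat.card_Icc,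
    smul_eq_mul]
  have hmap : Finset.Icc 2 (2*n-2) = (Finset.Icc 0 (2*n-4)).map (addRightEmbedding 2) := by
    rw [Finset.map_add_right_Icc]
    congr 1
    omega
  have hsum2 : ∑ j ∈ Finset.Icc 2 (2*n-2), Cc (n-2) (j-2)
      = ∑ q ∈ Finset.Icc 0 (2*n-4), Cc (n-2) q := by
    rw [hmap, Finset.sum_map]
    apply Finset.sum_congr rfl
    intro q hq
    simp [addRightEmbedding]
  rw [hsum2]
  have htop : ∑ q ∈ Finset.Icc 0 (2*n-4), Cc (n-2) q
      = (∑ q ∈ Finset.Icc 0 (2*n-5), Cc (n-2) q) + Ac (n-2) := by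
    rw [show 2*n-4 = (2*n-5)+1 from by omega, Finset.sum_Icc_succ_top (by omega)]
    congr 1
    exact key3b (n-2) (2*n-5+1) (by omega)
  rw [htop]
  have hA1 : ∑ q ∈ Finset.Icc 0 (2*n-5), Cc (n-2) q = Ac (n-1) := by
    rw [key1 (n-1) (by omega), show n-1-1 = n-2 from by omega]
    have hmap1 : Finset.Icc 1 (2*(n-1)-2) = (Finset.Icc 0 (2*n-5)).map (addRightEmbedding 1) := by
      rw [Finset.map_add_right_Icc]
      congr 1
      omega
    rw [hmap1, Finset.sum_map]
    apply Finset.sum_congr rfl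
    intro q hq
    simp [addRightEmbedding]
  rw [hA1]
  have hco : 2*n-2+1-2 = 2*n-3 := by omega
  rw [hco]
  have h2 : 2*n-1 = (2*n-3)+2 := by omega
  rw [h2]
  ring

theorem stmt_12 (a : ℕ → ℕ) (h1 : a 1 = 0) (h2 : a 2 = 1)
    (hrec : ∀ n : ℕ, 3 ≤ n → a n = (2 * n - 1) * a (n - 1) + a (n - 2)) :
    ∀ n : ℕ, 1 ≤ n → a n = Nat.card (LCD n 2) := by
  have hLCD : ∀ n : ℕ, Nat.card (LCD n 2) = Ac n := by
    intro n
    unfold Ac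
    have hset : LCD n 2 = Chords (2*n) ∅ := by
      ext P
      simp [LCD, Chords]
    rw [hset]
  intro n hn
  rw [hLCD]
  induction n using Nat.strong_induction_on with
  | _ n ih =>
    match n, hn with
    | 1, _ => rw [h1, Ac_one]
    | 2, _ => rw [h2, Ac_two]
    | (k+3), _ =>
      rw [hrec (k+3) (by omega), Ac_rec (k+3) (by omega)]
      rw [ih (k+3-1) (by omega) (by omega), ih (k+3-2) (by omega) (by omega)]
end
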